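/- arXiv:1109.3915 — 3 statements merged into one kernel-verified Lean document; each statement's English description precedes it below -/
import Mathlib

section
/- For every n ≥ 1 and every pair of partitions σ, τ of n with ρ(σ,τ) = 1, there exists a coupling (X₁, Y₁) of one step of the split-merge chain from σ and one step from τ such that almost surely ρ(X₁, Y₁) ≤ 1, and ℙ(X₁ = Y₁) ≥ 4·s(σ,τ)/n². -/
noncomputable section
open scoped BigOperators Classical

/-- Total variation distance between two functions (distributions) on a finite set. -/
def tvDist {Ω : Type*} [Fintype Ω] (μ ν : Ω → ℝ) : ℝ := (∑ x, |μ x - ν x|) / 2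

/-- Transition matrix of the random transposition walk on `S_n`. -/
def rtMatrix (n : ℕ) : Matrix (Equiv.Perm (Fin n)) (Equiv.Perm (Fin n)) ℝ :=
  fun σ α =>
    ((Finset.univ.filter (fun ij : Fin n × Fin n => σ * Equiv.swap ij.1 ij.2 = α)).card : ℝ)
      / (n : ℝ) ^ 2

/-- Uniform (stationary) distribution on `S_n`. -/
def rtPi (n : ℕ) : Equiv.Perm (Fin n) → ℝ := fun _ => ((n.factorial : ℝ))⁻¹

/-- Cycle type of a permutation, as a partition of `n`. -/
def cyc (n : ℕ) (α : Equiv.Perm (Fin n)) : Nat.Partition n :=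
  cast (congrArg Nat.Partition (Fintype.card_fin n)) α.partition

/-- Transition probabilities of the split-merge chain on partitions of `n`. -/
def smKernel (n : ℕ) (p q : Nat.Partition n) : ℝ :=
  (if q = p then (1 : ℝ) / n else 0)
  + (p.parts.map (fun a =>
      ∑ r ∈ Finset.Ico 1 a,
        if q.parts = r ::ₘ (a - r) ::ₘ p.parts.erase a then (a : ℝ) / (n : ℝ) ^ 2 else 0)).sum
  + (p.parts.map (fun a =>
      ((p.parts.erase a).map (fun b =>
        if q.parts = (a + b) ::ₘ ((p.parts.erase a).erase b) then
          (a : ℝ) * (b : ℝ) / (n : ℝ) ^ 2 else 0)).sum)).sum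

/-- Transition matrix of the split-merge chain. -/
def smMatrix (n : ℕ) : Matrix (Nat.Partition n) (Nat.Partition n) ℝ := fun p q => smKernel n p q

/-- Stationary distribution of the split-merge chain: `π(σ) = |Perm(σ)|/n!`. -/
def smPi (n : ℕ) : Nat.Partition n → ℝ := fun σ =>
  ((Finset.univ.filter (fun α : Equiv.Perm (Fin n) => cyc n α = σ)).card : ℝ) / (n.factorial : ℝ)

/-- `p` is obtained from `q` by splitting one part into two. -/
def IsSplitOf (n : ℕ) (p q : Nat.Partition n) : Prop :=
  ∃ a ∈ q.parts, ∃ r : ℕ, 1 ≤ r ∧ r < a ∧ p.parts = r ::ₘ (a - r) ::ₘ q.parts.erase a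

/-- Adjacency graph of single split/merge moves on partitions of `n`. -/
def smGraph (n : ℕ) : SimpleGraph (Nat.Partition n) where
  Adj p q := p ≠ q ∧ (IsSplitOf n p q ∨ IsSplitOf n q p)
  symm := ⟨fun p q h => ⟨h.1.symm, h.2.symm⟩⟩
  loopless := ⟨fun p h => h.1 rfl⟩

/-- The split-merge graph distance `ρ` on partitions of `n`. -/
def rho (n : ℕ) (p q : Nat.Partition n) : ℕ := (smGraph n).dist p q

/-- The multiset of parts on which two partitions differ. -/
def diffParts {n : ℕ} (σ τ : Nat.Partition n) : Multiset ℕ :=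
  (σ.parts - τ.parts) + (τ.parts - σ.parts)

/-- `s(σ,τ)`: the smallest part in which adjacent `σ` and `τ` differ; `s(σ,σ) = n/2`. -/
def sPart (n : ℕ) (σ τ : Nat.Partition n) : ℝ :=
  if σ = τ then (n : ℝ) / 2 else ((((diffParts σ τ).sort (· ≤ ·)).headI : ℕ) : ℝ)

/-- `m(σ,τ)`: the medium part in which adjacent `σ` and `τ` differ; `m(σ,σ) = n`. -/
def mPart (n : ℕ) (σ τ : Nat.Partition n) : ℝ :=
  if σ = τ then (n : ℝ) else (((((diffParts σ τ).sort (· ≤ ·)).tail).headI : ℕ) : ℝ)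

/-- `|V(σ,x)|`: the sum of the parts of `σ` of size at least `x`. -/
def Vsum {n : ℕ} (σ : Nat.Partition n) (x : ℝ) : ℝ :=
  (((Multiset.filter (fun a : ℕ => x ≤ (a : ℝ)) σ.parts).sum : ℕ) : ℝ)

/-- A coupling of two split-merge chains started at `(σ, τ)`, given by the probabilities
`P t h` of each finite trajectory `h` of states at times `0, …, t`. -/
def IsSMCoupling (n : ℕ) (σ τ : Nat.Partition n)
    (P : (t : ℕ) → (Fin (t + 1) → Nat.Partition n × Nat.Partition n) → ℝ) : Prop :=
  (∀ t h, 0 ≤ P t h) ∧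
  (P 0 (fun _ => (σ, τ)) = 1) ∧
  (∀ (t : ℕ) (h : Fin (t + 1) → Nat.Partition n × Nat.Partition n),
      P t h = ∑ z : Nat.Partition n × Nat.Partition n, P (t + 1) (Fin.snoc h z)) ∧
  (∀ (t : ℕ) (h : Fin (t + 1) → Nat.Partition n × Nat.Partition n) (a : Nat.Partition n),
      ∑ b : Nat.Partition n, P (t + 1) (Fin.snoc h (a, b))
        = smKernel n (h (Fin.last t)).1 a * P t h) ∧
  (∀ (t : ℕ) (h : Fin (t + 1) → Nat.Partition n × Nat.Partition n) (b : Nat.Partition n),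
      ∑ a : Nat.Partition n, P (t + 1) (Fin.snoc h (a, b))
        = smKernel n (h (Fin.last t)).2 b * P t h)

/-- The coupling is coalescent: once the two coordinates meet they stay together. -/
def IsCoalescent (n : ℕ)
    (P : (t : ℕ) → (Fin (t + 1) → Nat.Partition n × Nat.Partition n) → ℝ) : Prop :=
  ∀ (t : ℕ) (h : Fin (t + 1) → Nat.Partition n × Nat.Partition n), P t h ≠ 0 →
    ∀ i j : Fin (t + 1), i ≤ j → (h i).1 = (h i).2 → (h j).1 = (h j).2

/-- Along the coupling, `ρ(X_t, Y_t) ≤ 1` almost surely. -/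
def StaysClose (n : ℕ)
    (P : (t : ℕ) → (Fin (t + 1) → Nat.Partition n × Nat.Partition n) → ℝ) : Prop :=
  ∀ (t : ℕ) (h : Fin (t + 1) → Nat.Partition n × Nat.Partition n), P t h ≠ 0 →
    ∀ i : Fin (t + 1), rho n (h i).1 (h i).2 ≤ 1

/-- On the event `X_t ≠ Y_t`, the conditional probability of meeting at time `t+1`
is at least `4 s(X_t,Y_t)/n²`. -/
def MeetLowerBound (n : ℕ)
    (P : (t : ℕ) → (Fin (t + 1) → Nat.Partition n × Nat.Partition n) → ℝ) : Prop :=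
  ∀ (t : ℕ) (h : Fin (t + 1) → Nat.Partition n × Nat.Partition n),
    (h (Fin.last t)).1 ≠ (h (Fin.last t)).2 →
      4 * sPart n (h (Fin.last t)).1 (h (Fin.last t)).2 / (n : ℝ) ^ 2 * P t h ≤
        ∑ z : Nat.Partition n, P (t + 1) (Fin.snoc h (z, z))

/-- Probability that the pair of chains at time `t` satisfies `E`. -/
def probAt (n : ℕ)
    (P : (t : ℕ) → (Fin (t + 1) → Nat.Partition n × Nat.Partition n) → ℝ) (t : ℕ)
    (E : Nat.Partition n × Nat.Partition n → Prop) : ℝ :=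
  ∑ h : Fin (t + 1) → Nat.Partition n × Nat.Partition n,
    if E (h (Fin.last t)) then P t h else 0

/-- Expectation of `g(X_t, Y_t)`. -/
def expAt (n : ℕ)
    (P : (t : ℕ) → (Fin (t + 1) → Nat.Partition n × Nat.Partition n) → ℝ) (t : ℕ)
    (g : Nat.Partition n × Nat.Partition n → ℝ) : ℝ :=
  ∑ h : Fin (t + 1) → Nat.Partition n × Nat.Partition n, P t h * g (h (Fin.last t))

/-- A coupling of one step of the split-merge chain from `σ` and from `τ`. -/
def IsOneStepCoupling (n : ℕ) (σ τ : Nat.Partition n)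
    (μ : Nat.Partition n × Nat.Partition n → ℝ) : Prop :=
  (∀ z, 0 ≤ μ z) ∧ (∀ p, ∑ q, μ (p, q) = smKernel n σ p) ∧
    (∀ q, ∑ p, μ (p, q) = smKernel n τ q)

/-- Length of the cycle of `α` containing `v`. -/
def cycLen {n : ℕ} (α : Equiv.Perm (Fin n)) (v : Fin n) : ℕ :=
  Function.minimalPeriod ⇑α v


section SMAuxSection
set_option linter.unusedSectionVars false
set_option linter.unusedVariables false
set_option linter.unreachableTactic false
set_option linter.unusedTactic false
open Multiset Finset
namespace SMAux

/-- indicator of a proposition -/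
def χ (P : Prop) : ℝ := if P then 1 else 0

lemma chi_nonneg (P : Prop) : 0 ≤ χ P := by unfold χ; split_ifs <;> norm_num

lemma chi_true {P : Prop} (h : P) : χ P = 1 := by simp [χ, h]

lemma chi_false {P : Prop} (h : ¬ P) : χ P = 0 := by simp [χ, h]

lemma ite_eq_chi_mul (P : Prop) [Decidable P] (m : ℝ) :
    (if P then m else 0) = χ P * m := by
  unfold χ; split_ifs with h <;> simp [h]

lemma msum_congr {α : Type*} {L : Multiset α} {f g : α → ℝ} (h : ∀ a ∈ L, f a = g a) :
    (L.map f).sum = (L.map g).sum := by rw [Multiset.map_congr rfl h]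

lemma sum_msum_comm {α β : Type*} [Fintype β] (L : Multiset α) (f : α → β → ℝ) :
    ∑ q : β, (L.map (fun a => f a q)).sum = (L.map (fun a => ∑ q : β, f a q)).sum := by
  induction L using Multiset.induction with
  | empty => simp
  | cons a s ih => simp [Finset.sum_add_distrib, ih]

lemma msum_nonneg {α : Type*} {L : Multiset α} {f : α → ℝ} (h : ∀ a ∈ L, 0 ≤ f a) :
    0 ≤ (L.map f).sum :=
  Multiset.sum_nonneg (by intro x hx; obtain ⟨a, ha, rfl⟩ := Multiset.mem_map.mp hx; exact h a ha)

-- multiset erase helpers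
lemma erase_cons_of_mem {α : Type*} [DecidableEq α] {a : α} (x : α) {L : Multiset α} (h : a ∈ L) :
    (x ::ₘ L).erase a = x ::ₘ L.erase a := by
  conv_lhs => rw [← Multiset.cons_erase h, Multiset.cons_swap, Multiset.erase_cons_head]

lemma erase_cons_cons_of_mem {α : Type*} [DecidableEq α] {a : α} (x y : α) {L : Multiset α}
    (h : a ∈ L) : (x ::ₘ y ::ₘ L).erase a = x ::ₘ y ::ₘ L.erase a := by
  rw [erase_cons_of_mem x (Multiset.mem_cons_of_mem h), erase_cons_of_mem y h]

lemma erase_cons_snd {α : Type*} [DecidableEq α] (x y : α) (M : Multiset α) :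
    (x ::ₘ y ::ₘ M).erase y = x ::ₘ M := by
  rw [Multiset.cons_swap, Multiset.erase_cons_head]

lemma sum_erase_of_mem {L : Multiset ℕ} {a : ℕ} (h : a ∈ L) :
    a + (L.erase a).sum = L.sum := by
  conv_rhs => rw [← Multiset.cons_erase h]
  simp

-- partition basics
lemma parts_eq_iff {n : ℕ} {p q : Nat.Partition n} : p.parts = q.parts ↔ p = q :=
  ⟨fun h => Nat.Partition.ext h, fun h => by rw [h]⟩

/-- key summation: indicator of q having prescribed valid parts sums to 1 -/
lemma sum_chi_parts {n : ℕ} (Y : Multiset ℕ) (hpos : ∀ i ∈ Y, 0 < i) (hs : Y.sum = n)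
    (P : Prop) (m : ℝ) :
    ∑ q : Nat.Partition n, χ (P ∧ q.parts = Y) * m = χ P * m := by
  by_cases hP : P
  · let q₀ : Nat.Partition n := ⟨Y, fun {i} hi => hpos i hi, hs⟩
    have h1 : ∀ q : Nat.Partition n, χ (P ∧ q.parts = Y) * m = if q = q₀ then m else 0 := by
      intro q
      by_cases hq : q = q₀
      · rw [if_pos hq, chi_true ⟨hP, by rw [hq]⟩, one_mul]
      · rw [if_neg hq, chi_false, zero_mul]
        rintro ⟨-, hq2⟩
        exact hq (Nat.Partition.ext hq2)
    rw [Finset.sum_congr rfl (fun q _ => h1 q), Finset.sum_ite_eq' Finset.univ q₀ (fun _ => m),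
      if_pos (Finset.mem_univ _), chi_true hP, one_mul]
  · rw [chi_false hP, zero_mul]
    rw [Finset.sum_congr rfl (fun q _ => by rw [chi_false (fun h => hP h.1), zero_mul]),
      Finset.sum_const, smul_zero]

lemma sum_chi_parts_left {n : ℕ} (X : Multiset ℕ) (hpos : ∀ i ∈ X, 0 < i) (hs : X.sum = n)
    (Q : Prop) (m : ℝ) :
    ∑ p : Nat.Partition n, χ (p.parts = X ∧ Q) * m = χ Q * m := by
  have : ∀ p : Nat.Partition n, χ (p.parts = X ∧ Q) * m = χ (Q ∧ p.parts = X) * m := by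
    intro p; rw [show (p.parts = X ∧ Q) = (Q ∧ p.parts = X) from propext (and_comm)]
  rw [Finset.sum_congr rfl (fun p _ => this p)]
  exact sum_chi_parts X hpos hs Q m

/-- elementary coupling block -/
def T {n : ℕ} (X Y : Multiset ℕ) (m : ℝ) (z : Nat.Partition n × Nat.Partition n) : ℝ :=
  χ (z.1.parts = X ∧ z.2.parts = Y) * m

lemma T_nonneg {n : ℕ} {X Y m} (hm : 0 ≤ m) (z : Nat.Partition n × Nat.Partition n) :
    0 ≤ T X Y m z := mul_nonneg (chi_nonneg _) hm

lemma T_sum_q {n : ℕ} (X Y : Multiset ℕ) (m : ℝ) (p : Nat.Partition n)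
    (hpos : ∀ i ∈ Y, 0 < i) (hs : Y.sum = n) :
    ∑ q : Nat.Partition n, T X Y m (p, q) = χ (p.parts = X) * m := by
  simp only [T]
  exact sum_chi_parts Y hpos hs (p.parts = X) m

lemma T_sum_p {n : ℕ} (X Y : Multiset ℕ) (m : ℝ) (q : Nat.Partition n)
    (hpos : ∀ i ∈ X, 0 < i) (hs : X.sum = n) :
    ∑ p : Nat.Partition n, T X Y m (p, q) = χ (q.parts = Y) * m := by
  simp only [T]
  exact sum_chi_parts_left X hpos hs (q.parts = Y) m

lemma T_ne_zero {n : ℕ} {X Y : Multiset ℕ} {m : ℝ} {p q : Nat.Partition n}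
    (h : T X Y m (p, q) ≠ 0) : p.parts = X ∧ q.parts = Y := by
  by_contra hc
  exact h (by rw [T, chi_false hc, zero_mul])

-- graph distance facts
lemma rho_self {n : ℕ} (p : Nat.Partition n) : rho n p p = 0 := by
  unfold rho; simp

lemma rho_comm {n : ℕ} (p q : Nat.Partition n) : rho n p q = rho n q p := by
  unfold rho; exact SimpleGraph.dist_comm

lemma rho_le_one_pattern {n : ℕ} (p q : Nat.Partition n) (x y : ℕ) (W : Multiset ℕ)
    (hx : 1 ≤ x) (hy : 1 ≤ y) (hp : p.parts = x ::ₘ y ::ₘ W) (hq : q.parts = (x + y) ::ₘ W) :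
    rho n p q ≤ 1 := by
  have hadj : (smGraph n).Adj p q := by
    show p ≠ q ∧ (IsSplitOf n p q ∨ IsSplitOf n q p)
    constructor
    · intro hpq
      have : p.parts = q.parts := by rw [hpq]
      rw [hp, hq] at this
      have := congrArg Multiset.card this
      simp [Multiset.card_cons] at this
    · left
      refine ⟨x + y, by rw [hq]; exact Multiset.mem_cons_self _ _, x, hx, by omega, ?_⟩
      rw [hp, hq, Multiset.erase_cons_head, Nat.add_sub_cancel_left]
  unfold rho
  exact le_of_eq (SimpleGraph.dist_eq_one_iff_adj.mpr hadj)

lemma rho_le_one_of_eq_parts {n : ℕ} {p q : Nat.Partition n} (h : p.parts = q.parts) :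
    rho n p q ≤ 1 := by
  rw [parts_eq_iff.mp h, rho_self]; omega

lemma K_sigma (n : ℕ) (hn : 1 ≤ n) (σ : Nat.Partition n) (b c : ℕ) (L : Multiset ℕ)
    (hσ : σ.parts = b ::ₘ c ::ₘ L) (p : Nat.Partition n) :
    smKernel n σ p =
      χ (p.parts = b ::ₘ c ::ₘ L) * ((n:ℝ)/(n:ℝ)^2)
    + (∑ r ∈ Finset.Ico 1 b, χ (p.parts = r ::ₘ (b-r) ::ₘ c ::ₘ L) * ((b:ℝ)/(n:ℝ)^2))
    + (∑ r ∈ Finset.Ico 1 c, χ (p.parts = r ::ₘ (c-r) ::ₘ b ::ₘ L) * ((c:ℝ)/(n:ℝ)^2))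
    + (L.map (fun a => ∑ r ∈ Finset.Ico 1 a,
        χ (p.parts = r ::ₘ (a-r) ::ₘ b ::ₘ c ::ₘ L.erase a) * ((a:ℝ)/(n:ℝ)^2))).sum
    + χ (p.parts = (b+c) ::ₘ L) * ((b:ℝ)*(c:ℝ)/(n:ℝ)^2)
    + (L.map (fun a => χ (p.parts = (b+a) ::ₘ c ::ₘ L.erase a) * ((b:ℝ)*(a:ℝ)/(n:ℝ)^2))).sum
    + χ (p.parts = (b+c) ::ₘ L) * ((c:ℝ)*(b:ℝ)/(n:ℝ)^2)
    + (L.map (fun a => χ (p.parts = (c+a) ::ₘ b ::ₘ L.erase a) * ((c:ℝ)*(a:ℝ)/(n:ℝ)^2))).sum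
    + (L.map (fun a => χ (p.parts = (a+b) ::ₘ c ::ₘ L.erase a) * ((a:ℝ)*(b:ℝ)/(n:ℝ)^2))).sum
    + (L.map (fun a => χ (p.parts = (a+c) ::ₘ b ::ₘ L.erase a) * ((a:ℝ)*(c:ℝ)/(n:ℝ)^2))).sum
    + (L.map (fun a => ((L.erase a).map (fun d =>
        χ (p.parts = (a+d) ::ₘ b ::ₘ c ::ₘ (L.erase a).erase d) * ((a:ℝ)*(d:ℝ)/(n:ℝ)^2))).sum)).sum
    := by
  have hn0 : (n:ℝ) ≠ 0 := Nat.cast_ne_zero.mpr (by omega)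
  rw [smKernel, hσ]
  simp only [ite_eq_chi_mul]
  simp only [show (p = σ) = (p.parts = b ::ₘ c ::ₘ L) from propext
    ⟨fun h => by rw [h, hσ], fun h => Nat.Partition.ext (by rw [hσ]; exact h)⟩]
  simp only [show (1:ℝ)/(n:ℝ) = (n:ℝ)/(n:ℝ)^2 from by field_simp]
  simp only [Multiset.map_cons, Multiset.sum_cons, Multiset.erase_cons_head, erase_cons_snd]
  rw [show (Multiset.map
      (fun x => ∑ x_1 ∈ Finset.Ico 1 x,
          χ (p.parts = x_1 ::ₘ (x - x_1) ::ₘ (b ::ₘ c ::ₘ L).erase x) * ((x:ℝ) / (n:ℝ) ^ 2)) L).sum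
    = (Multiset.map (fun a => ∑ r ∈ Finset.Ico 1 a,
          χ (p.parts = r ::ₘ (a - r) ::ₘ b ::ₘ c ::ₘ L.erase a) * ((a:ℝ) / (n:ℝ) ^ 2)) L).sum from
    msum_congr (fun a ha => by rw [erase_cons_cons_of_mem b c ha])]
  rw [show (Multiset.map
      (fun x => χ (p.parts = (b + x) ::ₘ (c ::ₘ L).erase x) * ((b:ℝ) * (x:ℝ) / (n:ℝ) ^ 2)) L).sum
    = (Multiset.map (fun a => χ (p.parts = (b + a) ::ₘ c ::ₘ L.erase a) * ((b:ℝ) * (a:ℝ) / (n:ℝ) ^ 2)) L).sum from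
    msum_congr (fun a ha => by rw [erase_cons_of_mem c ha])]
  rw [show (Multiset.map
      (fun x => χ (p.parts = (c + x) ::ₘ (b ::ₘ L).erase x) * ((c:ℝ) * (x:ℝ) / (n:ℝ) ^ 2)) L).sum
    = (Multiset.map (fun a => χ (p.parts = (c + a) ::ₘ b ::ₘ L.erase a) * ((c:ℝ) * (a:ℝ) / (n:ℝ) ^ 2)) L).sum from
    msum_congr (fun a ha => by rw [erase_cons_of_mem b ha])]
  rw [show (Multiset.map
      (fun x => (Multiset.map
          (fun x_1 => χ (p.parts = (x + x_1) ::ₘ ((b ::ₘ c ::ₘ L).erase x).erase x_1) * ((x:ℝ) * (x_1:ℝ) / (n:ℝ) ^ 2))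
          ((b ::ₘ c ::ₘ L).erase x)).sum) L).sum
    = (Multiset.map (fun a =>
        χ (p.parts = (a + b) ::ₘ c ::ₘ L.erase a) * ((a:ℝ) * (b:ℝ) / (n:ℝ) ^ 2)
        + (χ (p.parts = (a + c) ::ₘ b ::ₘ L.erase a) * ((a:ℝ) * (c:ℝ) / (n:ℝ) ^ 2)
        + (Multiset.map (fun d =>
            χ (p.parts = (a + d) ::ₘ b ::ₘ c ::ₘ (L.erase a).erase d) * ((a:ℝ) * (d:ℝ) / (n:ℝ) ^ 2))
            (L.erase a)).sum)) L).sum from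
    msum_congr (fun a ha => by
      rw [erase_cons_cons_of_mem b c ha]
      simp only [Multiset.map_cons, Multiset.sum_cons, Multiset.erase_cons_head, erase_cons_snd]
      rw [show (Multiset.map
          (fun x_1 => χ (p.parts = (a + x_1) ::ₘ (b ::ₘ c ::ₘ L.erase a).erase x_1) * ((a:ℝ) * (x_1:ℝ) / (n:ℝ) ^ 2))
          (L.erase a)).sum
        = (Multiset.map (fun d =>
            χ (p.parts = (a + d) ::ₘ b ::ₘ c ::ₘ (L.erase a).erase d) * ((a:ℝ) * (d:ℝ) / (n:ℝ) ^ 2))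
            (L.erase a)).sum from
        msum_congr (fun d hd => by rw [erase_cons_cons_of_mem b c hd])])]
  simp only [Nat.add_comm c b]
  rw [Multiset.sum_map_add, Multiset.sum_map_add]
  ring

lemma K_tau (n : ℕ) (hn : 1 ≤ n) (τ : Nat.Partition n) (b c : ℕ) (L : Multiset ℕ)
    (hτ : τ.parts = (b + c) ::ₘ L) (q : Nat.Partition n) :
    smKernel n τ q =
      χ (q.parts = (b + c) ::ₘ L) * ((n:ℝ)/(n:ℝ)^2)
    + (∑ r ∈ Finset.Ico 1 (b + c), χ (q.parts = r ::ₘ (b + c - r) ::ₘ L) * (((b:ℝ)+(c:ℝ))/(n:ℝ)^2))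
    + (L.map (fun a => ∑ r ∈ Finset.Ico 1 a,
        χ (q.parts = r ::ₘ (a - r) ::ₘ (b + c) ::ₘ L.erase a) * ((a:ℝ)/(n:ℝ)^2))).sum
    + (L.map (fun a => χ (q.parts = (b + c + a) ::ₘ L.erase a) * (((b:ℝ)+(c:ℝ)) * (a:ℝ)/(n:ℝ)^2))).sum
    + (L.map (fun a => χ (q.parts = (a + (b + c)) ::ₘ L.erase a) * ((a:ℝ) * ((b:ℝ)+(c:ℝ))/(n:ℝ)^2))).sum
    + (L.map (fun a => ((L.erase a).map (fun d =>
        χ (q.parts = (a + d) ::ₘ (b + c) ::ₘ (L.erase a).erase d) * ((a:ℝ)*(d:ℝ)/(n:ℝ)^2))).sum)).sum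
    := by
  have hn0 : (n:ℝ) ≠ 0 := Nat.cast_ne_zero.mpr (by omega)
  rw [smKernel, hτ]
  simp only [ite_eq_chi_mul]
  simp only [show (q = τ) = (q.parts = (b + c) ::ₘ L) from propext
    ⟨fun h => by rw [h, hτ], fun h => Nat.Partition.ext (by rw [hτ]; exact h)⟩]
  simp only [show (1:ℝ)/(n:ℝ) = (n:ℝ)/(n:ℝ)^2 from by field_simp]
  simp only [Multiset.map_cons, Multiset.sum_cons, Multiset.erase_cons_head, Nat.cast_add]
  rw [show (Multiset.map
      (fun x => ∑ x_1 ∈ Finset.Ico 1 x,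
          χ (q.parts = x_1 ::ₘ (x - x_1) ::ₘ ((b + c) ::ₘ L).erase x) * ((x:ℝ) / (n:ℝ) ^ 2)) L).sum
    = (Multiset.map (fun a => ∑ r ∈ Finset.Ico 1 a,
          χ (q.parts = r ::ₘ (a - r) ::ₘ (b + c) ::ₘ L.erase a) * ((a:ℝ) / (n:ℝ) ^ 2)) L).sum from
    msum_congr (fun a ha => by rw [erase_cons_of_mem (b + c) ha])]
  rw [show (Multiset.map
      (fun x => (Multiset.map
          (fun x_1 => χ (q.parts = (x + x_1) ::ₘ (((b + c) ::ₘ L).erase x).erase x_1) * ((x:ℝ) * (x_1:ℝ) / (n:ℝ) ^ 2))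
          (((b + c) ::ₘ L).erase x)).sum) L).sum
    = (Multiset.map (fun a =>
        χ (q.parts = (a + (b + c)) ::ₘ L.erase a) * ((a:ℝ) * ((b:ℝ)+(c:ℝ)) / (n:ℝ) ^ 2)
        + (Multiset.map (fun d =>
            χ (q.parts = (a + d) ::ₘ (b + c) ::ₘ (L.erase a).erase d) * ((a:ℝ) * (d:ℝ) / (n:ℝ) ^ 2))
            (L.erase a)).sum) L).sum from
    msum_congr (fun a ha => by
      rw [erase_cons_of_mem (b + c) ha]
      simp only [Multiset.map_cons, Multiset.sum_cons, Multiset.erase_cons_head, Nat.cast_add]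
      rw [show (Multiset.map
          (fun x_1 => χ (q.parts = (a + x_1) ::ₘ ((b + c) ::ₘ L.erase a).erase x_1) * ((a:ℝ) * (x_1:ℝ) / (n:ℝ) ^ 2))
          (L.erase a)).sum
        = (Multiset.map (fun d =>
            χ (q.parts = (a + d) ::ₘ (b + c) ::ₘ (L.erase a).erase d) * ((a:ℝ) * (d:ℝ) / (n:ℝ) ^ 2))
            (L.erase a)).sum from
        msum_congr (fun d hd => by rw [erase_cons_of_mem (b + c) hd])])]
  rw [Multiset.sum_map_add]
  ring

def mu (n b c : ℕ) (L : Multiset ℕ) (z : Nat.Partition n × Nat.Partition n) : ℝ :=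
  T (b ::ₘ c ::ₘ L) ((b+c) ::ₘ L) (((n:ℝ) - 2*b)/(n:ℝ)^2) z
+ T (b ::ₘ c ::ₘ L) (b ::ₘ c ::ₘ L) (2*(b:ℝ)/(n:ℝ)^2) z
+ T ((b+c) ::ₘ L) ((b+c) ::ₘ L) (2*(b:ℝ)/(n:ℝ)^2) z
+ T ((b+c) ::ₘ L) (b ::ₘ c ::ₘ L) (((c:ℝ)-(b:ℝ))/(n:ℝ)^2) z
+ (L.map (fun a => ∑ r ∈ Finset.Ico 1 a,
    T (r ::ₘ (a-r) ::ₘ b ::ₘ c ::ₘ L.erase a) (r ::ₘ (a-r) ::ₘ (b+c) ::ₘ L.erase a)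
      ((a:ℝ)/(n:ℝ)^2) z)).sum
+ (L.map (fun a => ((L.erase a).map (fun d =>
    T ((a+d) ::ₘ b ::ₘ c ::ₘ (L.erase a).erase d) ((a+d) ::ₘ (b+c) ::ₘ (L.erase a).erase d)
      ((a:ℝ)*(d:ℝ)/(n:ℝ)^2) z)).sum)).sum
+ (L.map (fun a => T ((a+b) ::ₘ c ::ₘ L.erase a) ((a+(b+c)) ::ₘ L.erase a)
      ((a:ℝ)*(b:ℝ)/(n:ℝ)^2) z)).sum
+ (L.map (fun a => T ((a+c) ::ₘ b ::ₘ L.erase a) ((a+(b+c)) ::ₘ L.erase a)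
      ((a:ℝ)*(c:ℝ)/(n:ℝ)^2) z)).sum
+ (L.map (fun a => T ((b+a) ::ₘ c ::ₘ L.erase a) ((b+c+a) ::ₘ L.erase a)
      ((b:ℝ)*(a:ℝ)/(n:ℝ)^2) z)).sum
+ (L.map (fun a => T ((c+a) ::ₘ b ::ₘ L.erase a) ((b+c+a) ::ₘ L.erase a)
      ((c:ℝ)*(a:ℝ)/(n:ℝ)^2) z)).sum
+ (∑ r ∈ Finset.Ico 1 b,
    T (r ::ₘ (b-r) ::ₘ c ::ₘ L) (r ::ₘ (b+c-r) ::ₘ L) ((b:ℝ)/(n:ℝ)^2) z)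
+ (∑ r ∈ Finset.Ico 1 c,
    T (r ::ₘ (c-r) ::ₘ b ::ₘ L) (r ::ₘ (b+c-r) ::ₘ L) ((c:ℝ)/(n:ℝ)^2) z)
+ (∑ r ∈ Finset.Ico b c,
    T ((b+c) ::ₘ L) (r ::ₘ (b+c-r) ::ₘ L) ((b:ℝ)/(n:ℝ)^2) z)
+ (∑ r ∈ Finset.Ico (c+1) (b+c),
    T ((b+c) ::ₘ L) (r ::ₘ (b+c-r) ::ₘ L) (((b:ℝ)+(c:ℝ))/(n:ℝ)^2) z)

section Marg
variable {n b c : ℕ} {L : Multiset ℕ}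
variable (hn : 1 ≤ n) (hb : 1 ≤ b) (hbc : b ≤ c)
  (hLpos : ∀ x ∈ L, 0 < x) (hsum : b + c + L.sum = n)

include hb hbc hLpos hsum

-- validity facts
lemma posSp : ∀ i ∈ (b ::ₘ c ::ₘ L), 0 < i := by
  intro i hi; simp only [Multiset.mem_cons] at hi
  rcases hi with rfl | rfl | hi
  · omega
  · omega
  · exact hLpos _ hi

lemma sumSp : (b ::ₘ c ::ₘ L).sum = n := by simp only [Multiset.sum_cons]; omega

lemma posTp : ∀ i ∈ ((b+c) ::ₘ L), 0 < i := by
  intro i hi; simp only [Multiset.mem_cons] at hi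
  rcases hi with rfl | hi
  · omega
  · exact hLpos _ hi

lemma sumTp : ((b+c) ::ₘ L).sum = n := by simp only [Multiset.sum_cons]; omega

lemma posY5 {a r : ℕ} (ha : a ∈ L) (h1 : 1 ≤ r) (h2 : r < a) :
    ∀ i ∈ (r ::ₘ (a-r) ::ₘ (b+c) ::ₘ L.erase a), 0 < i := by
  intro i hi; simp only [Multiset.mem_cons] at hi
  rcases hi with rfl | rfl | rfl | hi
  · omega
  · omega
  · omega
  · exact hLpos _ (Multiset.mem_of_mem_erase hi)

lemma sumY5 {a r : ℕ} (ha : a ∈ L) (h1 : 1 ≤ r) (h2 : r < a) :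
    (r ::ₘ (a-r) ::ₘ (b+c) ::ₘ L.erase a).sum = n := by
  have := sum_erase_of_mem ha
  simp only [Multiset.sum_cons]; omega

lemma posX5 {a r : ℕ} (ha : a ∈ L) (h1 : 1 ≤ r) (h2 : r < a) :
    ∀ i ∈ (r ::ₘ (a-r) ::ₘ b ::ₘ c ::ₘ L.erase a), 0 < i := by
  intro i hi; simp only [Multiset.mem_cons] at hi
  rcases hi with rfl | rfl | rfl | rfl | hi
  · omega
  · omega
  · omega
  · omega
  · exact hLpos _ (Multiset.mem_of_mem_erase hi)

lemma sumX5 {a r : ℕ} (ha : a ∈ L) (h1 : 1 ≤ r) (h2 : r < a) :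
    (r ::ₘ (a-r) ::ₘ b ::ₘ c ::ₘ L.erase a).sum = n := by
  have := sum_erase_of_mem ha
  simp only [Multiset.sum_cons]; omega

lemma posY6 {a d : ℕ} (ha : a ∈ L) (hd : d ∈ L.erase a) :
    ∀ i ∈ ((a+d) ::ₘ (b+c) ::ₘ (L.erase a).erase d), 0 < i := by
  have haa := hLpos _ ha
  intro i hi; simp only [Multiset.mem_cons] at hi
  rcases hi with rfl | rfl | hi
  · omega
  · omega
  · exact hLpos _ (Multiset.mem_of_mem_erase (Multiset.mem_of_mem_erase hi))

lemma sumY6 {a d : ℕ} (ha : a ∈ L) (hd : d ∈ L.erase a) :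
    ((a+d) ::ₘ (b+c) ::ₘ (L.erase a).erase d).sum = n := by
  have h1 := sum_erase_of_mem ha
  have h2 := sum_erase_of_mem hd
  simp only [Multiset.sum_cons]; omega

lemma posX6 {a d : ℕ} (ha : a ∈ L) (hd : d ∈ L.erase a) :
    ∀ i ∈ ((a+d) ::ₘ b ::ₘ c ::ₘ (L.erase a).erase d), 0 < i := by
  have haa := hLpos _ ha
  intro i hi; simp only [Multiset.mem_cons] at hi
  rcases hi with rfl | rfl | rfl | hi
  · omega
  · omega
  · omega
  · exact hLpos _ (Multiset.mem_of_mem_erase (Multiset.mem_of_mem_erase hi))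

lemma sumX6 {a d : ℕ} (ha : a ∈ L) (hd : d ∈ L.erase a) :
    ((a+d) ::ₘ b ::ₘ c ::ₘ (L.erase a).erase d).sum = n := by
  have h1 := sum_erase_of_mem ha
  have h2 := sum_erase_of_mem hd
  simp only [Multiset.sum_cons]; omega

lemma posMerge {a x y : ℕ} (ha : a ∈ L) (hx : 0 < x) (hy : 0 < y) :
    ∀ i ∈ ((x) ::ₘ y ::ₘ L.erase a), 0 < i := by
  intro i hi; simp only [Multiset.mem_cons] at hi
  rcases hi with rfl | rfl | hi
  · omega
  · omega
  · exact hLpos _ (Multiset.mem_of_mem_erase hi)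

lemma posMerge1 {a x : ℕ} (ha : a ∈ L) (hx : 0 < x) :
    ∀ i ∈ (x ::ₘ L.erase a), 0 < i := by
  intro i hi; simp only [Multiset.mem_cons] at hi
  rcases hi with rfl | hi
  · omega
  · exact hLpos _ (Multiset.mem_of_mem_erase hi)

lemma posYr {r : ℕ} (h1 : 1 ≤ r) (h2 : r < b + c) :
    ∀ i ∈ (r ::ₘ (b+c-r) ::ₘ L), 0 < i := by
  intro i hi; simp only [Multiset.mem_cons] at hi
  rcases hi with rfl | rfl | hi
  · omega
  · omega
  · exact hLpos _ hi

lemma sumYr {r : ℕ} (h1 : 1 ≤ r) (h2 : r < b + c) :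
    (r ::ₘ (b+c-r) ::ₘ L).sum = n := by simp only [Multiset.sum_cons]; omega

lemma posX11 {r : ℕ} (h1 : 1 ≤ r) (h2 : r < b) :
    ∀ i ∈ (r ::ₘ (b-r) ::ₘ c ::ₘ L), 0 < i := by
  intro i hi; simp only [Multiset.mem_cons] at hi
  rcases hi with rfl | rfl | rfl | hi
  · omega
  · omega
  · omega
  · exact hLpos _ hi

lemma sumX11 {r : ℕ} (h1 : 1 ≤ r) (h2 : r < b) :
    (r ::ₘ (b-r) ::ₘ c ::ₘ L).sum = n := by simp only [Multiset.sum_cons]; omega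

lemma posX12 {r : ℕ} (h1 : 1 ≤ r) (h2 : r < c) :
    ∀ i ∈ (r ::ₘ (c-r) ::ₘ b ::ₘ L), 0 < i := by
  intro i hi; simp only [Multiset.mem_cons] at hi
  rcases hi with rfl | rfl | rfl | hi
  · omega
  · omega
  · omega
  · exact hLpos _ hi

lemma sumX12 {r : ℕ} (h1 : 1 ≤ r) (h2 : r < c) :
    (r ::ₘ (c-r) ::ₘ b ::ₘ L).sum = n := by simp only [Multiset.sum_cons]; omega

lemma marg_sigma (σ : Nat.Partition n) (hσ : σ.parts = b ::ₘ c ::ₘ L) (p : Nat.Partition n) :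
    ∑ q : Nat.Partition n, mu n b c L (p, q) = smKernel n σ p := by
  have hn : 1 ≤ n := by omega
  have hc1 : 1 ≤ c := le_trans hb hbc
  rw [K_sigma n hn σ b c L hσ p]
  simp only [mu]
  simp only [Finset.sum_add_distrib]
  rw [show ∑ q : Nat.Partition n,
      T (b ::ₘ c ::ₘ L) ((b+c) ::ₘ L) (((n:ℝ) - 2*b)/(n:ℝ)^2) (p, q)
      = χ (p.parts = b ::ₘ c ::ₘ L) * (((n:ℝ) - 2*b)/(n:ℝ)^2) from
    T_sum_q _ _ _ p (posTp hb hbc hLpos hsum) (sumTp hb hbc hLpos hsum)]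
  rw [show ∑ q : Nat.Partition n,
      T (b ::ₘ c ::ₘ L) (b ::ₘ c ::ₘ L) (2*(b:ℝ)/(n:ℝ)^2) (p, q)
      = χ (p.parts = b ::ₘ c ::ₘ L) * (2*(b:ℝ)/(n:ℝ)^2) from
    T_sum_q _ _ _ p (posSp hb hbc hLpos hsum) (sumSp hb hbc hLpos hsum)]
  rw [show ∑ q : Nat.Partition n,
      T ((b+c) ::ₘ L) ((b+c) ::ₘ L) (2*(b:ℝ)/(n:ℝ)^2) (p, q)
      = χ (p.parts = (b+c) ::ₘ L) * (2*(b:ℝ)/(n:ℝ)^2) from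
    T_sum_q _ _ _ p (posTp hb hbc hLpos hsum) (sumTp hb hbc hLpos hsum)]
  rw [show ∑ q : Nat.Partition n,
      T ((b+c) ::ₘ L) (b ::ₘ c ::ₘ L) (((c:ℝ)-(b:ℝ))/(n:ℝ)^2) (p, q)
      = χ (p.parts = (b+c) ::ₘ L) * (((c:ℝ)-(b:ℝ))/(n:ℝ)^2) from
    T_sum_q _ _ _ p (posSp hb hbc hLpos hsum) (sumSp hb hbc hLpos hsum)]
  rw [show ∑ q : Nat.Partition n, (L.map (fun a => ∑ r ∈ Finset.Ico 1 a,
        T (r ::ₘ (a-r) ::ₘ b ::ₘ c ::ₘ L.erase a) (r ::ₘ (a-r) ::ₘ (b+c) ::ₘ L.erase a)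
          ((a:ℝ)/(n:ℝ)^2) (p, q))).sum
      = (L.map (fun a => ∑ r ∈ Finset.Ico 1 a,
          χ (p.parts = r ::ₘ (a-r) ::ₘ b ::ₘ c ::ₘ L.erase a) * ((a:ℝ)/(n:ℝ)^2))).sum from by
    rw [sum_msum_comm]
    exact msum_congr (fun a ha => by
      rw [Finset.sum_comm]
      exact Finset.sum_congr rfl (fun r hr => by
        have hr' := Finset.mem_Ico.mp hr
        exact T_sum_q _ _ _ p (posY5 hb hbc hLpos hsum ha hr'.1 hr'.2)
          (sumY5 hb hbc hLpos hsum ha hr'.1 hr'.2)))]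
  rw [show ∑ q : Nat.Partition n, (L.map (fun a => ((L.erase a).map (fun d =>
        T ((a+d) ::ₘ b ::ₘ c ::ₘ (L.erase a).erase d) ((a+d) ::ₘ (b+c) ::ₘ (L.erase a).erase d)
          ((a:ℝ)*(d:ℝ)/(n:ℝ)^2) (p, q))).sum)).sum
      = (L.map (fun a => ((L.erase a).map (fun d =>
          χ (p.parts = (a+d) ::ₘ b ::ₘ c ::ₘ (L.erase a).erase d)
            * ((a:ℝ)*(d:ℝ)/(n:ℝ)^2))).sum)).sum from by
    rw [sum_msum_comm]
    exact msum_congr (fun a ha => by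
      rw [sum_msum_comm]
      exact msum_congr (fun d hd =>
        T_sum_q _ _ _ p (posY6 hb hbc hLpos hsum ha hd) (sumY6 hb hbc hLpos hsum ha hd)))]
  rw [show ∑ q : Nat.Partition n, (L.map (fun a =>
        T ((a+b) ::ₘ c ::ₘ L.erase a) ((a+(b+c)) ::ₘ L.erase a) ((a:ℝ)*(b:ℝ)/(n:ℝ)^2) (p, q))).sum
      = (L.map (fun a =>
          χ (p.parts = (a+b) ::ₘ c ::ₘ L.erase a) * ((a:ℝ)*(b:ℝ)/(n:ℝ)^2))).sum from by
    rw [sum_msum_comm]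
    exact msum_congr (fun a ha => T_sum_q _ _ _ p
      (posMerge1 hb hbc hLpos hsum ha (by have := hLpos a ha; omega))
      (by have := sum_erase_of_mem ha; simp only [Multiset.sum_cons]; omega))]
  rw [show ∑ q : Nat.Partition n, (L.map (fun a =>
        T ((a+c) ::ₘ b ::ₘ L.erase a) ((a+(b+c)) ::ₘ L.erase a) ((a:ℝ)*(c:ℝ)/(n:ℝ)^2) (p, q))).sum
      = (L.map (fun a =>
          χ (p.parts = (a+c) ::ₘ b ::ₘ L.erase a) * ((a:ℝ)*(c:ℝ)/(n:ℝ)^2))).sum from by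
    rw [sum_msum_comm]
    exact msum_congr (fun a ha => T_sum_q _ _ _ p
      (posMerge1 hb hbc hLpos hsum ha (by have := hLpos a ha; omega))
      (by have := sum_erase_of_mem ha; simp only [Multiset.sum_cons]; omega))]
  rw [show ∑ q : Nat.Partition n, (L.map (fun a =>
        T ((b+a) ::ₘ c ::ₘ L.erase a) ((b+c+a) ::ₘ L.erase a) ((b:ℝ)*(a:ℝ)/(n:ℝ)^2) (p, q))).sum
      = (L.map (fun a =>
          χ (p.parts = (b+a) ::ₘ c ::ₘ L.erase a) * ((b:ℝ)*(a:ℝ)/(n:ℝ)^2))).sum from by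
    rw [sum_msum_comm]
    exact msum_congr (fun a ha => T_sum_q _ _ _ p
      (posMerge1 hb hbc hLpos hsum ha (by omega))
      (by have := sum_erase_of_mem ha; simp only [Multiset.sum_cons]; omega))]
  rw [show ∑ q : Nat.Partition n, (L.map (fun a =>
        T ((c+a) ::ₘ b ::ₘ L.erase a) ((b+c+a) ::ₘ L.erase a) ((c:ℝ)*(a:ℝ)/(n:ℝ)^2) (p, q))).sum
      = (L.map (fun a =>
          χ (p.parts = (c+a) ::ₘ b ::ₘ L.erase a) * ((c:ℝ)*(a:ℝ)/(n:ℝ)^2))).sum from by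
    rw [sum_msum_comm]
    exact msum_congr (fun a ha => T_sum_q _ _ _ p
      (posMerge1 hb hbc hLpos hsum ha (by omega))
      (by have := sum_erase_of_mem ha; simp only [Multiset.sum_cons]; omega))]
  rw [show ∑ q : Nat.Partition n, ∑ r ∈ Finset.Ico 1 b,
        T (r ::ₘ (b-r) ::ₘ c ::ₘ L) (r ::ₘ (b+c-r) ::ₘ L) ((b:ℝ)/(n:ℝ)^2) (p, q)
      = ∑ r ∈ Finset.Ico 1 b,
          χ (p.parts = r ::ₘ (b-r) ::ₘ c ::ₘ L) * ((b:ℝ)/(n:ℝ)^2) from by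
    rw [Finset.sum_comm]
    exact Finset.sum_congr rfl (fun r hr => by
      have hr' := Finset.mem_Ico.mp hr
      exact T_sum_q _ _ _ p (posYr hb hbc hLpos hsum hr'.1 (by omega))
        (sumYr hb hbc hLpos hsum hr'.1 (by omega)))]
  rw [show ∑ q : Nat.Partition n, ∑ r ∈ Finset.Ico 1 c,
        T (r ::ₘ (c-r) ::ₘ b ::ₘ L) (r ::ₘ (b+c-r) ::ₘ L) ((c:ℝ)/(n:ℝ)^2) (p, q)
      = ∑ r ∈ Finset.Ico 1 c,
          χ (p.parts = r ::ₘ (c-r) ::ₘ b ::ₘ L) * ((c:ℝ)/(n:ℝ)^2) from by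
    rw [Finset.sum_comm]
    exact Finset.sum_congr rfl (fun r hr => by
      have hr' := Finset.mem_Ico.mp hr
      exact T_sum_q _ _ _ p (posYr hb hbc hLpos hsum hr'.1 (by omega))
        (sumYr hb hbc hLpos hsum hr'.1 (by omega)))]
  rw [show ∑ q : Nat.Partition n, ∑ r ∈ Finset.Ico b c,
        T ((b+c) ::ₘ L) (r ::ₘ (b+c-r) ::ₘ L) ((b:ℝ)/(n:ℝ)^2) (p, q)
      = ((c:ℝ)-(b:ℝ)) * (χ (p.parts = (b+c) ::ₘ L) * ((b:ℝ)/(n:ℝ)^2)) from by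
    rw [Finset.sum_comm]
    rw [Finset.sum_congr rfl (fun r hr => by
      have hr' := Finset.mem_Ico.mp hr
      exact T_sum_q _ _ _ p (posYr hb hbc hLpos hsum (by omega) (by omega))
        (sumYr hb hbc hLpos hsum (by omega) (by omega)))]
    rw [Finset.sum_const, Nat.card_Ico, nsmul_eq_mul, Nat.cast_sub hbc]]
  rw [show ∑ q : Nat.Partition n, ∑ r ∈ Finset.Ico (c+1) (b+c),
        T ((b+c) ::ₘ L) (r ::ₘ (b+c-r) ::ₘ L) (((b:ℝ)+(c:ℝ))/(n:ℝ)^2) (p, q)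
      = ((b:ℝ)-1) * (χ (p.parts = (b+c) ::ₘ L) * (((b:ℝ)+(c:ℝ))/(n:ℝ)^2)) from by
    rw [Finset.sum_comm]
    rw [Finset.sum_congr rfl (fun r hr => by
      have hr' := Finset.mem_Ico.mp hr
      exact T_sum_q _ _ _ p (posYr hb hbc hLpos hsum (by omega) (by omega))
        (sumYr hb hbc hLpos hsum (by omega) (by omega)))]
    rw [Finset.sum_const, Nat.card_Ico, nsmul_eq_mul,
      show b + c - (c+1) = b - 1 from by omega, Nat.cast_sub hb, Nat.cast_one]]
  ring

lemma marg_tau (τ : Nat.Partition n) (hτ : τ.parts = (b+c) ::ₘ L) (q : Nat.Partition n) :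
    ∑ p : Nat.Partition n, mu n b c L (p, q) = smKernel n τ q := by
  have hn : 1 ≤ n := by omega
  have hc1 : 1 ≤ c := le_trans hb hbc
  rw [K_tau n hn τ b c L hτ q]
  simp only [mu]
  simp only [Finset.sum_add_distrib]
  -- evaluate the fourteen pieces via T_sum_p
  rw [show ∑ p : Nat.Partition n,
      T (b ::ₘ c ::ₘ L) ((b+c) ::ₘ L) (((n:ℝ) - 2*b)/(n:ℝ)^2) (p, q)
      = χ (q.parts = (b+c) ::ₘ L) * (((n:ℝ) - 2*b)/(n:ℝ)^2) from
    T_sum_p _ _ _ q (posSp hb hbc hLpos hsum) (sumSp hb hbc hLpos hsum)]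
  rw [show ∑ p : Nat.Partition n,
      T (b ::ₘ c ::ₘ L) (b ::ₘ c ::ₘ L) (2*(b:ℝ)/(n:ℝ)^2) (p, q)
      = χ (q.parts = b ::ₘ c ::ₘ L) * (2*(b:ℝ)/(n:ℝ)^2) from
    T_sum_p _ _ _ q (posSp hb hbc hLpos hsum) (sumSp hb hbc hLpos hsum)]
  rw [show ∑ p : Nat.Partition n,
      T ((b+c) ::ₘ L) ((b+c) ::ₘ L) (2*(b:ℝ)/(n:ℝ)^2) (p, q)
      = χ (q.parts = (b+c) ::ₘ L) * (2*(b:ℝ)/(n:ℝ)^2) from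
    T_sum_p _ _ _ q (posTp hb hbc hLpos hsum) (sumTp hb hbc hLpos hsum)]
  rw [show ∑ p : Nat.Partition n,
      T ((b+c) ::ₘ L) (b ::ₘ c ::ₘ L) (((c:ℝ)-(b:ℝ))/(n:ℝ)^2) (p, q)
      = χ (q.parts = b ::ₘ c ::ₘ L) * (((c:ℝ)-(b:ℝ))/(n:ℝ)^2) from
    T_sum_p _ _ _ q (posTp hb hbc hLpos hsum) (sumTp hb hbc hLpos hsum)]
  rw [show ∑ p : Nat.Partition n, (L.map (fun a => ∑ r ∈ Finset.Ico 1 a,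
        T (r ::ₘ (a-r) ::ₘ b ::ₘ c ::ₘ L.erase a) (r ::ₘ (a-r) ::ₘ (b+c) ::ₘ L.erase a)
          ((a:ℝ)/(n:ℝ)^2) (p, q))).sum
      = (L.map (fun a => ∑ r ∈ Finset.Ico 1 a,
          χ (q.parts = r ::ₘ (a-r) ::ₘ (b+c) ::ₘ L.erase a) * ((a:ℝ)/(n:ℝ)^2))).sum from by
    rw [sum_msum_comm]
    exact msum_congr (fun a ha => by
      rw [Finset.sum_comm]
      exact Finset.sum_congr rfl (fun r hr => by
        have hr' := Finset.mem_Ico.mp hr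
        exact T_sum_p _ _ _ q (posX5 hb hbc hLpos hsum ha hr'.1 hr'.2)
          (sumX5 hb hbc hLpos hsum ha hr'.1 hr'.2)))]
  rw [show ∑ p : Nat.Partition n, (L.map (fun a => ((L.erase a).map (fun d =>
        T ((a+d) ::ₘ b ::ₘ c ::ₘ (L.erase a).erase d) ((a+d) ::ₘ (b+c) ::ₘ (L.erase a).erase d)
          ((a:ℝ)*(d:ℝ)/(n:ℝ)^2) (p, q))).sum)).sum
      = (L.map (fun a => ((L.erase a).map (fun d =>
          χ (q.parts = (a+d) ::ₘ (b+c) ::ₘ (L.erase a).erase d)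
            * ((a:ℝ)*(d:ℝ)/(n:ℝ)^2))).sum)).sum from by
    rw [sum_msum_comm]
    exact msum_congr (fun a ha => by
      rw [sum_msum_comm]
      exact msum_congr (fun d hd =>
        T_sum_p _ _ _ q (posX6 hb hbc hLpos hsum ha hd) (sumX6 hb hbc hLpos hsum ha hd)))]
  rw [show ∑ p : Nat.Partition n, (L.map (fun a =>
        T ((a+b) ::ₘ c ::ₘ L.erase a) ((a+(b+c)) ::ₘ L.erase a) ((a:ℝ)*(b:ℝ)/(n:ℝ)^2) (p, q))).sum
      = (L.map (fun a =>
          χ (q.parts = (a+(b+c)) ::ₘ L.erase a) * ((a:ℝ)*(b:ℝ)/(n:ℝ)^2))).sum from by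
    rw [sum_msum_comm]
    exact msum_congr (fun a ha => T_sum_p _ _ _ q
      (posMerge hb hbc hLpos hsum ha (by have := hLpos a ha; omega) (by omega))
      (by have := sum_erase_of_mem ha; simp only [Multiset.sum_cons]; omega))]
  rw [show ∑ p : Nat.Partition n, (L.map (fun a =>
        T ((a+c) ::ₘ b ::ₘ L.erase a) ((a+(b+c)) ::ₘ L.erase a) ((a:ℝ)*(c:ℝ)/(n:ℝ)^2) (p, q))).sum
      = (L.map (fun a =>
          χ (q.parts = (a+(b+c)) ::ₘ L.erase a) * ((a:ℝ)*(c:ℝ)/(n:ℝ)^2))).sum from by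
    rw [sum_msum_comm]
    exact msum_congr (fun a ha => T_sum_p _ _ _ q
      (posMerge hb hbc hLpos hsum ha (by have := hLpos a ha; omega) (by omega))
      (by have := sum_erase_of_mem ha; simp only [Multiset.sum_cons]; omega))]
  rw [show ∑ p : Nat.Partition n, (L.map (fun a =>
        T ((b+a) ::ₘ c ::ₘ L.erase a) ((b+c+a) ::ₘ L.erase a) ((b:ℝ)*(a:ℝ)/(n:ℝ)^2) (p, q))).sum
      = (L.map (fun a =>
          χ (q.parts = (b+c+a) ::ₘ L.erase a) * ((b:ℝ)*(a:ℝ)/(n:ℝ)^2))).sum from by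
    rw [sum_msum_comm]
    exact msum_congr (fun a ha => T_sum_p _ _ _ q
      (posMerge hb hbc hLpos hsum ha (by omega) (by omega))
      (by have := sum_erase_of_mem ha; simp only [Multiset.sum_cons]; omega))]
  rw [show ∑ p : Nat.Partition n, (L.map (fun a =>
        T ((c+a) ::ₘ b ::ₘ L.erase a) ((b+c+a) ::ₘ L.erase a) ((c:ℝ)*(a:ℝ)/(n:ℝ)^2) (p, q))).sum
      = (L.map (fun a =>
          χ (q.parts = (b+c+a) ::ₘ L.erase a) * ((c:ℝ)*(a:ℝ)/(n:ℝ)^2))).sum from by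
    rw [sum_msum_comm]
    exact msum_congr (fun a ha => T_sum_p _ _ _ q
      (posMerge hb hbc hLpos hsum ha (by omega) (by omega))
      (by have := sum_erase_of_mem ha; simp only [Multiset.sum_cons]; omega))]
  rw [show ∑ p : Nat.Partition n, ∑ r ∈ Finset.Ico 1 b,
        T (r ::ₘ (b-r) ::ₘ c ::ₘ L) (r ::ₘ (b+c-r) ::ₘ L) ((b:ℝ)/(n:ℝ)^2) (p, q)
      = ∑ r ∈ Finset.Ico 1 b,
          χ (q.parts = r ::ₘ (b+c-r) ::ₘ L) * ((b:ℝ)/(n:ℝ)^2) from by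
    rw [Finset.sum_comm]
    exact Finset.sum_congr rfl (fun r hr => by
      have hr' := Finset.mem_Ico.mp hr
      exact T_sum_p _ _ _ q (posX11 hb hbc hLpos hsum hr'.1 hr'.2)
        (sumX11 hb hbc hLpos hsum hr'.1 hr'.2))]
  rw [show ∑ p : Nat.Partition n, ∑ r ∈ Finset.Ico 1 c,
        T (r ::ₘ (c-r) ::ₘ b ::ₘ L) (r ::ₘ (b+c-r) ::ₘ L) ((c:ℝ)/(n:ℝ)^2) (p, q)
      = (∑ r ∈ Finset.Ico 1 b, χ (q.parts = r ::ₘ (b+c-r) ::ₘ L) * ((c:ℝ)/(n:ℝ)^2))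
      + (∑ r ∈ Finset.Ico b c, χ (q.parts = r ::ₘ (b+c-r) ::ₘ L) * ((c:ℝ)/(n:ℝ)^2)) from by
    rw [Finset.sum_comm]
    rw [Finset.sum_congr rfl (fun r hr => by
      have hr' := Finset.mem_Ico.mp hr
      exact T_sum_p _ _ _ q (posX12 hb hbc hLpos hsum hr'.1 hr'.2)
        (sumX12 hb hbc hLpos hsum hr'.1 hr'.2))]
    rw [← Finset.sum_Ico_consecutive _ (show 1 ≤ b by omega) (show b ≤ c by omega)]]
  rw [show ∑ p : Nat.Partition n, ∑ r ∈ Finset.Ico b c,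
        T ((b+c) ::ₘ L) (r ::ₘ (b+c-r) ::ₘ L) ((b:ℝ)/(n:ℝ)^2) (p, q)
      = ∑ r ∈ Finset.Ico b c,
          χ (q.parts = r ::ₘ (b+c-r) ::ₘ L) * ((b:ℝ)/(n:ℝ)^2) from by
    rw [Finset.sum_comm]
    exact Finset.sum_congr rfl (fun r hr =>
      T_sum_p _ _ _ q (posTp hb hbc hLpos hsum) (sumTp hb hbc hLpos hsum))]
  rw [show ∑ p : Nat.Partition n, ∑ r ∈ Finset.Ico (c+1) (b+c),
        T ((b+c) ::ₘ L) (r ::ₘ (b+c-r) ::ₘ L) (((b:ℝ)+(c:ℝ))/(n:ℝ)^2) (p, q)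
      = ∑ r ∈ Finset.Ico (c+1) (b+c),
          χ (q.parts = r ::ₘ (b+c-r) ::ₘ L) * (((b:ℝ)+(c:ℝ))/(n:ℝ)^2) from by
    rw [Finset.sum_comm]
    exact Finset.sum_congr rfl (fun r hr =>
      T_sum_p _ _ _ q (posTp hb hbc hLpos hsum) (sumTp hb hbc hLpos hsum))]
  -- now split the big Ico sum on the right-hand side
  rw [show ∑ r ∈ Finset.Ico 1 (b+c),
        χ (q.parts = r ::ₘ (b+c-r) ::ₘ L) * (((b:ℝ)+(c:ℝ))/(n:ℝ)^2)
      = ((∑ r ∈ Finset.Ico 1 b, χ (q.parts = r ::ₘ (b+c-r) ::ₘ L) * ((b:ℝ)/(n:ℝ)^2))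
          + (∑ r ∈ Finset.Ico 1 b, χ (q.parts = r ::ₘ (b+c-r) ::ₘ L) * ((c:ℝ)/(n:ℝ)^2)))
      + ((∑ r ∈ Finset.Ico b c, χ (q.parts = r ::ₘ (b+c-r) ::ₘ L) * ((b:ℝ)/(n:ℝ)^2))
          + (∑ r ∈ Finset.Ico b c, χ (q.parts = r ::ₘ (b+c-r) ::ₘ L) * ((c:ℝ)/(n:ℝ)^2)))
      + χ (q.parts = b ::ₘ c ::ₘ L) * (((b:ℝ)+(c:ℝ))/(n:ℝ)^2)
      + ∑ r ∈ Finset.Ico (c+1) (b+c),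
          χ (q.parts = r ::ₘ (b+c-r) ::ₘ L) * (((b:ℝ)+(c:ℝ))/(n:ℝ)^2) from by
    rw [← Finset.sum_Ico_consecutive
        (fun r => χ (q.parts = r ::ₘ (b+c-r) ::ₘ L) * (((b:ℝ)+(c:ℝ))/(n:ℝ)^2))
        (show 1 ≤ b by omega) (show b ≤ b+c by omega)]
    rw [← Finset.sum_Ico_consecutive
        (fun r => χ (q.parts = r ::ₘ (b+c-r) ::ₘ L) * (((b:ℝ)+(c:ℝ))/(n:ℝ)^2))
        (show b ≤ c by omega) (show c ≤ b+c by omega)]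
    rw [← Finset.sum_Ico_consecutive
        (fun r => χ (q.parts = r ::ₘ (b+c-r) ::ₘ L) * (((b:ℝ)+(c:ℝ))/(n:ℝ)^2))
        (show c ≤ c+1 by omega) (show c+1 ≤ b+c by omega)]
    rw [Finset.sum_Ico_succ_top (le_refl c), Finset.Ico_self, Finset.sum_empty, zero_add]
    rw [show b + c - c = b from by omega, Multiset.cons_swap]
    rw [← Finset.sum_add_distrib, ← Finset.sum_add_distrib]
    rw [Finset.sum_congr rfl (fun r hr =>
      show χ (q.parts = r ::ₘ (b+c-r) ::ₘ L) * ((b:ℝ)/(n:ℝ)^2)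
          + χ (q.parts = r ::ₘ (b+c-r) ::ₘ L) * ((c:ℝ)/(n:ℝ)^2)
          = χ (q.parts = r ::ₘ (b+c-r) ::ₘ L) * (((b:ℝ)+(c:ℝ))/(n:ℝ)^2) from by ring)]
    rw [Finset.sum_congr rfl (fun r hr =>
      show χ (q.parts = r ::ₘ (b+c-r) ::ₘ L) * ((b:ℝ)/(n:ℝ)^2)
          + χ (q.parts = r ::ₘ (b+c-r) ::ₘ L) * ((c:ℝ)/(n:ℝ)^2)
          = χ (q.parts = r ::ₘ (b+c-r) ::ₘ L) * (((b:ℝ)+(c:ℝ))/(n:ℝ)^2) from by ring)]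
    ring]
  -- split the two merged maps on the right-hand side
  rw [show (L.map (fun a =>
        χ (q.parts = (b+c+a) ::ₘ L.erase a) * (((b:ℝ)+(c:ℝ)) * (a:ℝ)/(n:ℝ)^2))).sum
      = (L.map (fun a =>
          χ (q.parts = (b+c+a) ::ₘ L.erase a) * ((b:ℝ)*(a:ℝ)/(n:ℝ)^2))).sum
        + (L.map (fun a =>
          χ (q.parts = (b+c+a) ::ₘ L.erase a) * ((c:ℝ)*(a:ℝ)/(n:ℝ)^2))).sum from by
    rw [← Multiset.sum_map_add]
    exact msum_congr (fun a ha => by ring)]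
  rw [show (L.map (fun a =>
        χ (q.parts = (a+(b+c)) ::ₘ L.erase a) * ((a:ℝ) * ((b:ℝ)+(c:ℝ))/(n:ℝ)^2))).sum
      = (L.map (fun a =>
          χ (q.parts = (a+(b+c)) ::ₘ L.erase a) * ((a:ℝ)*(b:ℝ)/(n:ℝ)^2))).sum
        + (L.map (fun a =>
          χ (q.parts = (a+(b+c)) ::ₘ L.erase a) * ((a:ℝ)*(c:ℝ)/(n:ℝ)^2))).sum from by
    rw [← Multiset.sum_map_add]
    exact msum_congr (fun a ha => by ring)]
  ring

lemma mu_nonneg (z : Nat.Partition n × Nat.Partition n) : 0 ≤ mu n b c L z := by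
  have hn2b : (0:ℝ) ≤ (n:ℝ) - 2*(b:ℝ) := by
    have h2 : ((2*b : ℕ) : ℝ) ≤ (n : ℕ) := Nat.cast_le.mpr (by omega)
    push_cast at h2; linarith
  have hcb : (0:ℝ) ≤ (c:ℝ) - (b:ℝ) := by
    have h2 : ((b:ℕ):ℝ) ≤ ((c:ℕ):ℝ) := Nat.cast_le.mpr hbc
    linarith
  unfold mu
  repeat' apply add_nonneg
  all_goals first
    | exact T_nonneg (div_nonneg hn2b (by positivity)) _
    | exact T_nonneg (div_nonneg hcb (by positivity)) _
    | exact T_nonneg (by positivity) _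
    | exact msum_nonneg (fun a ha => T_nonneg (by positivity) _)
    | exact msum_nonneg (fun a ha =>
        msum_nonneg (fun d hd => T_nonneg (by positivity) _))
    | exact msum_nonneg (fun a ha =>
        Finset.sum_nonneg (fun r hr => T_nonneg (by positivity) _))
    | exact Finset.sum_nonneg (fun r hr => T_nonneg (by positivity) _)

omit hb hbc hLpos hsum in
lemma perm_a {u v w x : ℕ} {M : Multiset ℕ} :
    u ::ₘ v ::ₘ w ::ₘ x ::ₘ M = w ::ₘ x ::ₘ u ::ₘ v ::ₘ M := by
  simp only [← Multiset.singleton_add]; abel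

omit hb hbc hLpos hsum in
lemma perm_b {u v w : ℕ} {M : Multiset ℕ} :
    u ::ₘ v ::ₘ w ::ₘ M = w ::ₘ u ::ₘ v ::ₘ M := by
  simp only [← Multiset.singleton_add]; abel

omit hb hbc hLpos hsum in
lemma perm_c {u v w : ℕ} {M : Multiset ℕ} :
    u ::ₘ v ::ₘ w ::ₘ M = v ::ₘ w ::ₘ u ::ₘ M := by
  simp only [← Multiset.singleton_add]; abel

lemma mu_rho (p q : Nat.Partition n) (h : mu n b c L (p, q) ≠ 0) : rho n p q ≤ 1 := by
  have hc1 : 1 ≤ c := le_trans hb hbc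
  by_contra hgt
  apply h
  have z1 : ∀ (X Y : Multiset ℕ) (m : ℝ), (p.parts = X → q.parts = Y → False) →
      T X Y m (p, q) = 0 := fun X Y m hf => by
    rw [T, chi_false (fun hc => hf hc.1 hc.2), zero_mul]
  unfold mu
  rw [z1 _ _ _ (fun hp hq => hgt (rho_le_one_pattern p q b c L hb hc1 hp hq))]
  rw [z1 _ _ _ (fun hp hq => hgt (rho_le_one_of_eq_parts (hp.trans hq.symm)))]
  rw [z1 _ _ _ (fun hp hq => hgt (rho_le_one_of_eq_parts (hp.trans hq.symm)))]
  rw [z1 _ _ _ (fun hp hq => hgt (by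
    rw [rho_comm]; exact rho_le_one_pattern q p b c L hb hc1 hq hp))]
  rw [show (L.map (fun a => ∑ r ∈ Finset.Ico 1 a,
      T (r ::ₘ (a-r) ::ₘ b ::ₘ c ::ₘ L.erase a) (r ::ₘ (a-r) ::ₘ (b+c) ::ₘ L.erase a)
        ((a:ℝ)/(n:ℝ)^2) (p, q))).sum = 0 from
    Multiset.sum_eq_zero (fun x hx => by
      obtain ⟨a, ha, rfl⟩ := Multiset.mem_map.mp hx
      exact Finset.sum_eq_zero (fun r hr => z1 _ _ _ (fun hp hq => hgt
        (rho_le_one_pattern p q b c (r ::ₘ (a-r) ::ₘ L.erase a) hb hc1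
          (hp.trans perm_a) (hq.trans perm_b)))))]
  rw [show (L.map (fun a => ((L.erase a).map (fun d =>
      T ((a+d) ::ₘ b ::ₘ c ::ₘ (L.erase a).erase d) ((a+d) ::ₘ (b+c) ::ₘ (L.erase a).erase d)
        ((a:ℝ)*(d:ℝ)/(n:ℝ)^2) (p, q))).sum)).sum = 0 from
    Multiset.sum_eq_zero (fun x hx => by
      obtain ⟨a, ha, rfl⟩ := Multiset.mem_map.mp hx
      exact Multiset.sum_eq_zero (fun y hy => by
        obtain ⟨d, hd, rfl⟩ := Multiset.mem_map.mp hy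
        exact z1 _ _ _ (fun hp hq => hgt
          (rho_le_one_pattern p q b c ((a+d) ::ₘ (L.erase a).erase d) hb hc1
            (hp.trans perm_c) (hq.trans (Multiset.cons_swap _ _ _))))))]
  rw [show (L.map (fun a =>
      T ((a+b) ::ₘ c ::ₘ L.erase a) ((a+(b+c)) ::ₘ L.erase a) ((a:ℝ)*(b:ℝ)/(n:ℝ)^2) (p, q))).sum
      = 0 from
    Multiset.sum_eq_zero (fun x hx => by
      obtain ⟨a, ha, rfl⟩ := Multiset.mem_map.mp hx
      exact z1 _ _ _ (fun hp hq => hgt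
        (rho_le_one_pattern p q (a+b) c (L.erase a) (by omega) hc1 hp
          (hq.trans (by rw [show a+(b+c) = a+b+c from by omega])))))]
  rw [show (L.map (fun a =>
      T ((a+c) ::ₘ b ::ₘ L.erase a) ((a+(b+c)) ::ₘ L.erase a) ((a:ℝ)*(c:ℝ)/(n:ℝ)^2) (p, q))).sum
      = 0 from
    Multiset.sum_eq_zero (fun x hx => by
      obtain ⟨a, ha, rfl⟩ := Multiset.mem_map.mp hx
      exact z1 _ _ _ (fun hp hq => hgt
        (rho_le_one_pattern p q (a+c) b (L.erase a) (by omega) hb hp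
          (hq.trans (by rw [show a+(b+c) = a+c+b from by omega])))))]
  rw [show (L.map (fun a =>
      T ((b+a) ::ₘ c ::ₘ L.erase a) ((b+c+a) ::ₘ L.erase a) ((b:ℝ)*(a:ℝ)/(n:ℝ)^2) (p, q))).sum
      = 0 from
    Multiset.sum_eq_zero (fun x hx => by
      obtain ⟨a, ha, rfl⟩ := Multiset.mem_map.mp hx
      exact z1 _ _ _ (fun hp hq => hgt
        (rho_le_one_pattern p q (b+a) c (L.erase a) (by omega) hc1 hp
          (hq.trans (by rw [show b+c+a = b+a+c from by omega])))))]
  rw [show (L.map (fun a =>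
      T ((c+a) ::ₘ b ::ₘ L.erase a) ((b+c+a) ::ₘ L.erase a) ((c:ℝ)*(a:ℝ)/(n:ℝ)^2) (p, q))).sum
      = 0 from
    Multiset.sum_eq_zero (fun x hx => by
      obtain ⟨a, ha, rfl⟩ := Multiset.mem_map.mp hx
      exact z1 _ _ _ (fun hp hq => hgt
        (rho_le_one_pattern p q (c+a) b (L.erase a) (by omega) hb hp
          (hq.trans (by rw [show b+c+a = c+a+b from by omega])))))]
  rw [show (∑ r ∈ Finset.Ico 1 b,
      T (r ::ₘ (b-r) ::ₘ c ::ₘ L) (r ::ₘ (b+c-r) ::ₘ L) ((b:ℝ)/(n:ℝ)^2) (p, q)) = 0 from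
    Finset.sum_eq_zero (fun r hr => by
      have hr' := Finset.mem_Ico.mp hr
      exact z1 _ _ _ (fun hp hq => hgt
        (rho_le_one_pattern p q (b-r) c (r ::ₘ L) (by omega) hc1
          (hp.trans perm_c)
          (hq.trans (by
            rw [show b+c-r = (b-r)+c from by omega]
            exact Multiset.cons_swap _ _ _)))))]
  rw [show (∑ r ∈ Finset.Ico 1 c,
      T (r ::ₘ (c-r) ::ₘ b ::ₘ L) (r ::ₘ (b+c-r) ::ₘ L) ((c:ℝ)/(n:ℝ)^2) (p, q)) = 0 from
    Finset.sum_eq_zero (fun r hr => by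
      have hr' := Finset.mem_Ico.mp hr
      exact z1 _ _ _ (fun hp hq => hgt
        (rho_le_one_pattern p q (c-r) b (r ::ₘ L) (by omega) hb
          (hp.trans perm_c)
          (hq.trans (by
            rw [show b+c-r = (c-r)+b from by omega]
            exact Multiset.cons_swap _ _ _)))))]
  rw [show (∑ r ∈ Finset.Ico b c,
      T ((b+c) ::ₘ L) (r ::ₘ (b+c-r) ::ₘ L) ((b:ℝ)/(n:ℝ)^2) (p, q)) = 0 from
    Finset.sum_eq_zero (fun r hr => by
      have hr' := Finset.mem_Ico.mp hr
      exact z1 _ _ _ (fun hp hq => hgt (by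
        rw [rho_comm]
        exact rho_le_one_pattern q p r (b+c-r) L (by omega) (by omega)
          hq (hp.trans (by congr 1; omega)))))]
  rw [show (∑ r ∈ Finset.Ico (c+1) (b+c),
      T ((b+c) ::ₘ L) (r ::ₘ (b+c-r) ::ₘ L) (((b:ℝ)+(c:ℝ))/(n:ℝ)^2) (p, q)) = 0 from
    Finset.sum_eq_zero (fun r hr => by
      have hr' := Finset.mem_Ico.mp hr
      exact z1 _ _ _ (fun hp hq => hgt (by
        rw [rho_comm]
        exact rho_le_one_pattern q p r (b+c-r) L (by omega) (by omega)
          hq (hp.trans (by congr 1; omega)))))]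
  ring

lemma mu_diag (σ τ : Nat.Partition n) (hσ : σ.parts = b ::ₘ c ::ₘ L)
    (hτ : τ.parts = (b+c) ::ₘ L) (hne : σ ≠ τ) :
    4 * (b:ℝ) / (n:ℝ)^2 ≤ ∑ p : Nat.Partition n, mu n b c L (p, p) := by
  have hn2b : (0:ℝ) ≤ (n:ℝ) - 2*(b:ℝ) := by
    have h2 : ((2*b : ℕ) : ℝ) ≤ (n : ℕ) := Nat.cast_le.mpr (by omega)
    push_cast at h2; linarith
  have hcb : (0:ℝ) ≤ (c:ℝ) - (b:ℝ) := by
    have h2 : ((b:ℕ):ℝ) ≤ ((c:ℕ):ℝ) := Nat.cast_le.mpr hbc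
    linarith
  have key : ∀ z : Nat.Partition n × Nat.Partition n,
      T (b ::ₘ c ::ₘ L) (b ::ₘ c ::ₘ L) (2*(b:ℝ)/(n:ℝ)^2) z
      + T ((b+c) ::ₘ L) ((b+c) ::ₘ L) (2*(b:ℝ)/(n:ℝ)^2) z ≤ mu n b c L z := by
    intro z
    have n1 : 0 ≤ T (b ::ₘ c ::ₘ L) ((b+c) ::ₘ L) (((n:ℝ) - 2*b)/(n:ℝ)^2) z :=
      T_nonneg (div_nonneg hn2b (by positivity)) _
    have n4 : 0 ≤ T ((b+c) ::ₘ L) (b ::ₘ c ::ₘ L) (((c:ℝ)-(b:ℝ))/(n:ℝ)^2) z :=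
      T_nonneg (div_nonneg hcb (by positivity)) _
    have n5 : 0 ≤ (L.map (fun a => ∑ r ∈ Finset.Ico 1 a,
        T (r ::ₘ (a-r) ::ₘ b ::ₘ c ::ₘ L.erase a) (r ::ₘ (a-r) ::ₘ (b+c) ::ₘ L.erase a)
          ((a:ℝ)/(n:ℝ)^2) z)).sum :=
      msum_nonneg (fun a ha => Finset.sum_nonneg (fun r hr => T_nonneg (by positivity) _))
    have n6 : 0 ≤ (L.map (fun a => ((L.erase a).map (fun d =>
        T ((a+d) ::ₘ b ::ₘ c ::ₘ (L.erase a).erase d) ((a+d) ::ₘ (b+c) ::ₘ (L.erase a).erase d)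
          ((a:ℝ)*(d:ℝ)/(n:ℝ)^2) z)).sum)).sum :=
      msum_nonneg (fun a ha => msum_nonneg (fun d hd => T_nonneg (by positivity) _))
    have n7 : 0 ≤ (L.map (fun a => T ((a+b) ::ₘ c ::ₘ L.erase a) ((a+(b+c)) ::ₘ L.erase a)
          ((a:ℝ)*(b:ℝ)/(n:ℝ)^2) z)).sum :=
      msum_nonneg (fun a ha => T_nonneg (by positivity) _)
    have n8 : 0 ≤ (L.map (fun a => T ((a+c) ::ₘ b ::ₘ L.erase a) ((a+(b+c)) ::ₘ L.erase a)
          ((a:ℝ)*(c:ℝ)/(n:ℝ)^2) z)).sum :=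
      msum_nonneg (fun a ha => T_nonneg (by positivity) _)
    have n9 : 0 ≤ (L.map (fun a => T ((b+a) ::ₘ c ::ₘ L.erase a) ((b+c+a) ::ₘ L.erase a)
          ((b:ℝ)*(a:ℝ)/(n:ℝ)^2) z)).sum :=
      msum_nonneg (fun a ha => T_nonneg (by positivity) _)
    have n10 : 0 ≤ (L.map (fun a => T ((c+a) ::ₘ b ::ₘ L.erase a) ((b+c+a) ::ₘ L.erase a)
          ((c:ℝ)*(a:ℝ)/(n:ℝ)^2) z)).sum :=
      msum_nonneg (fun a ha => T_nonneg (by positivity) _)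
    have n11 : 0 ≤ ∑ r ∈ Finset.Ico 1 b,
        T (r ::ₘ (b-r) ::ₘ c ::ₘ L) (r ::ₘ (b+c-r) ::ₘ L) ((b:ℝ)/(n:ℝ)^2) z :=
      Finset.sum_nonneg (fun r hr => T_nonneg (by positivity) _)
    have n12 : 0 ≤ ∑ r ∈ Finset.Ico 1 c,
        T (r ::ₘ (c-r) ::ₘ b ::ₘ L) (r ::ₘ (b+c-r) ::ₘ L) ((c:ℝ)/(n:ℝ)^2) z :=
      Finset.sum_nonneg (fun r hr => T_nonneg (by positivity) _)
    have n13 : 0 ≤ ∑ r ∈ Finset.Ico b c,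
        T ((b+c) ::ₘ L) (r ::ₘ (b+c-r) ::ₘ L) ((b:ℝ)/(n:ℝ)^2) z :=
      Finset.sum_nonneg (fun r hr => T_nonneg (by positivity) _)
    have n14 : 0 ≤ ∑ r ∈ Finset.Ico (c+1) (b+c),
        T ((b+c) ::ₘ L) (r ::ₘ (b+c-r) ::ₘ L) (((b:ℝ)+(c:ℝ))/(n:ℝ)^2) z :=
      Finset.sum_nonneg (fun r hr => T_nonneg (by positivity) _)
    unfold mu
    linarith
  have eσ : T (b ::ₘ c ::ₘ L) (b ::ₘ c ::ₘ L) (2*(b:ℝ)/(n:ℝ)^2)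
      ((σ, σ) : Nat.Partition n × Nat.Partition n) = 2*(b:ℝ)/(n:ℝ)^2 := by
    rw [T, chi_true ⟨hσ, hσ⟩, one_mul]
  have eτ : T ((b+c) ::ₘ L) ((b+c) ::ₘ L) (2*(b:ℝ)/(n:ℝ)^2)
      ((τ, τ) : Nat.Partition n × Nat.Partition n) = 2*(b:ℝ)/(n:ℝ)^2 := by
    rw [T, chi_true ⟨hτ, hτ⟩, one_mul]
  have hA : 2*(b:ℝ)/(n:ℝ)^2 ≤ mu n b c L (σ, σ) := by
    have h0 : 0 ≤ T ((b+c) ::ₘ L) ((b+c) ::ₘ L) (2*(b:ℝ)/(n:ℝ)^2)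
        ((σ, σ) : Nat.Partition n × Nat.Partition n) := T_nonneg (by positivity) _
    have := key (σ, σ); rw [eσ] at this; linarith
  have hB : 2*(b:ℝ)/(n:ℝ)^2 ≤ mu n b c L (τ, τ) := by
    have h0 : 0 ≤ T (b ::ₘ c ::ₘ L) (b ::ₘ c ::ₘ L) (2*(b:ℝ)/(n:ℝ)^2)
        ((τ, τ) : Nat.Partition n × Nat.Partition n) := T_nonneg (by positivity) _
    have := key (τ, τ); rw [eτ] at this; linarith
  have hsub : ∑ p ∈ ({σ, τ} : Finset (Nat.Partition n)), mu n b c L (p, p)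
      ≤ ∑ p : Nat.Partition n, mu n b c L (p, p) :=
    Finset.sum_le_sum_of_subset_of_nonneg (Finset.subset_univ _)
      (fun p _ _ => mu_nonneg hb hbc hLpos hsum (p, p))
  rw [Finset.sum_pair hne] at hsub
  rw [show 4 * (b:ℝ) / (n:ℝ)^2 = 2*(b:ℝ)/(n:ℝ)^2 + 2*(b:ℝ)/(n:ℝ)^2 from by ring]
  linarith

end Marg
lemma diffParts_comm {n : ℕ} (σ τ : Nat.Partition n) : diffParts σ τ = diffParts τ σ := by
  rw [diffParts, diffParts]; exact add_comm _ _

lemma sPart_comm {n : ℕ} (σ τ : Nat.Partition n) : sPart n σ τ = sPart n τ σ := by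
  by_cases h : σ = τ
  · rw [h]
  · rw [sPart, sPart, if_neg h, if_neg (fun hh => h hh.symm), diffParts_comm]

lemma sPart_eq {n b c : ℕ} {L : Multiset ℕ} (hb : 1 ≤ b) (hbc : b ≤ c)
    (σ τ : Nat.Partition n) (hne : σ ≠ τ)
    (hσ : σ.parts = b ::ₘ c ::ₘ L) (hτ : τ.parts = (b+c) ::ₘ L) :
    sPart n σ τ = b := by
  rw [sPart, if_neg hne]
  have hbne : b + c ≠ b := by omega
  have hcne : b + c ≠ c := by omega
  have hd : diffParts σ τ = b ::ₘ c ::ₘ {b + c} := by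
    rw [diffParts, hσ, hτ]
    have e1 : (b ::ₘ c ::ₘ L) = (b ::ₘ c ::ₘ 0) + L := by simp
    have e2 : ((b + c) ::ₘ L) = ((b + c) ::ₘ 0) + L := by simp
    have s1 : (b ::ₘ c ::ₘ (0:Multiset ℕ)) - ((b+c) ::ₘ 0) = b ::ₘ c ::ₘ 0 := by
      rw [Multiset.sub_cons, Multiset.sub_zero,
        Multiset.erase_of_notMem (by simp; omega)]
    have u1 : ((b+c) ::ₘ (0:Multiset ℕ)).erase b = (b+c) ::ₘ 0 :=
      Multiset.erase_of_notMem (by simp; omega)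
    have u2 : ((b+c) ::ₘ (0:Multiset ℕ)).erase c = (b+c) ::ₘ 0 :=
      Multiset.erase_of_notMem (by simp; omega)
    have s2 : ((b+c) ::ₘ (0:Multiset ℕ)) - (b ::ₘ c ::ₘ 0) = (b+c) ::ₘ 0 := by
      rw [Multiset.sub_cons, Multiset.sub_cons, Multiset.sub_zero, u1, u2]
    rw [e1, e2, add_tsub_add_eq_tsub_right, add_tsub_add_eq_tsub_right, s1, s2]
    simp only [Multiset.cons_zero, ← Multiset.singleton_add]
    first | rfl | abel
  rw [hd]
  rw [show ((b ::ₘ c ::ₘ ({b + c} : Multiset ℕ)).sort (· ≤ ·)) = [b, c, b + c] from by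
    apply List.Perm.eq_of_pairwise' (Multiset.pairwise_sort _ _) ?_ ((Multiset.coe_eq_coe).mp ?_)
    · simp [List.pairwise_cons]; omega
    · rw [Multiset.sort_eq]; rfl]
  rfl

lemma core {n b c : ℕ} {L : Multiset ℕ} (hb : 1 ≤ b) (hbc : b ≤ c)
    (hLpos : ∀ x ∈ L, 0 < x) (hsum : b + c + L.sum = n)
    (σ τ : Nat.Partition n) (hne : σ ≠ τ)
    (hσ : σ.parts = b ::ₘ c ::ₘ L) (hτ : τ.parts = (b+c) ::ₘ L) :
    ∃ μ : Nat.Partition n × Nat.Partition n → ℝ,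
      IsOneStepCoupling n σ τ μ ∧
      (∀ p q, μ (p, q) ≠ 0 → rho n p q ≤ 1) ∧
      4 * sPart n σ τ / (n : ℝ) ^ 2 ≤ ∑ p, μ (p, p) := by
  refine ⟨mu n b c L,
    ⟨mu_nonneg hb hbc hLpos hsum,
     marg_sigma hb hbc hLpos hsum σ hσ,
     marg_tau hb hbc hLpos hsum τ hτ⟩,
    mu_rho hb hbc hLpos hsum,
    ?_⟩
  rw [sPart_eq hb hbc σ τ hne hσ hτ]
  exact mu_diag hb hbc hLpos hsum σ τ hσ hτ hne

end SMAux
end SMAuxSection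

open SMAux in
/-- For adjacent partitions there is a one-step coupling of the split-merge chain that stays
within distance `1` and meets with probability at least `4 s(σ,τ)/n²`. -/
theorem exists_one_step_coupling (n : ℕ) (hn : 1 ≤ n) (σ τ : Nat.Partition n)
    (h : rho n σ τ = 1) :
    ∃ μ : Nat.Partition n × Nat.Partition n → ℝ,
      IsOneStepCoupling n σ τ μ ∧
      (∀ p q, μ (p, q) ≠ 0 → rho n p q ≤ 1) ∧
      4 * sPart n σ τ / (n : ℝ) ^ 2 ≤ ∑ p, μ (p, p) := by
  have hadj : (smGraph n).Adj σ τ := by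
    rw [rho] at h
    exact SimpleGraph.dist_eq_one_iff_adj.mp h
  obtain ⟨hne, hsp | hsp⟩ : σ ≠ τ ∧ (IsSplitOf n σ τ ∨ IsSplitOf n τ σ) := hadj
  · -- σ is a split of τ
    obtain ⟨a, ha, r, hr1, hr2, hparts⟩ := hsp
    have hτL : τ.parts = a ::ₘ τ.parts.erase a := (Multiset.cons_erase ha).symm
    have hLpos : ∀ x ∈ τ.parts.erase a, 0 < x :=
      fun x hx => τ.parts_pos (Multiset.mem_of_mem_erase hx)
    have hsum0 : a + (τ.parts.erase a).sum = n := by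
      have := τ.parts_sum
      rw [hτL, Multiset.sum_cons] at this
      omega
    rcases le_or_gt r (a - r) with hle | hlt
    · exact core hr1 hle hLpos (by omega) σ τ hne hparts
        (by rw [show r + (a - r) = a from by omega]; exact hτL)
    · exact core (by omega) (by omega) hLpos (by omega) σ τ hne
        (hparts.trans (Multiset.cons_swap _ _ _))
        (by rw [show (a - r) + r = a from by omega]; exact hτL)
  · -- τ is a split of σ
    obtain ⟨a, ha, r, hr1, hr2, hparts⟩ := hsp
    have hσL : σ.parts = a ::ₘ σ.parts.erase a := (Multiset.cons_erase ha).symm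
    have hLpos : ∀ x ∈ σ.parts.erase a, 0 < x :=
      fun x hx => σ.parts_pos (Multiset.mem_of_mem_erase hx)
    have hsum0 : a + (σ.parts.erase a).sum = n := by
      have := σ.parts_sum
      rw [hσL, Multiset.sum_cons] at this
      omega
    have build : ∀ b c : ℕ, 1 ≤ b → b ≤ c →
        τ.parts = b ::ₘ c ::ₘ σ.parts.erase a → σ.parts = (b + c) ::ₘ σ.parts.erase a →
        ∃ μ : Nat.Partition n × Nat.Partition n → ℝ,
          IsOneStepCoupling n σ τ μ ∧
          (∀ p q, μ (p, q) ≠ 0 → rho n p q ≤ 1) ∧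
          4 * sPart n σ τ / (n : ℝ) ^ 2 ≤ ∑ p, μ (p, p) := by
      intro b c hb hbc hτp hσp
      have hsum : b + c + (σ.parts.erase a).sum = n := by
        have := σ.parts_sum
        rw [hσp, Multiset.sum_cons] at this
        omega
      refine ⟨fun z => mu n b c (σ.parts.erase a) (z.2, z.1),
        ⟨fun z => mu_nonneg hb hbc hLpos hsum (z.2, z.1),
         fun p => marg_tau hb hbc hLpos hsum σ hσp p,
         fun q => marg_sigma hb hbc hLpos hsum τ hτp q⟩,
        ?_, ?_⟩
      · intro p q hpq
        rw [rho_comm]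
        exact mu_rho hb hbc hLpos hsum q p hpq
      · rw [sPart_comm, sPart_eq hb hbc τ σ hne.symm hτp hσp]
        exact mu_diag hb hbc hLpos hsum τ σ hτp hσp hne.symm
    rcases le_or_gt r (a - r) with hle | hlt
    · exact build r (a - r) hr1 hle hparts
        (by rw [show r + (a - r) = a from by omega]; exact hσL)
    · exact build (a - r) r (by omega) (by omega)
        (hparts.trans (Multiset.cons_swap _ _ _))
        (by rw [show (a - r) + r = a from by omega]; exact hσL)


end
end

section
/- Let α, β > 0 and let (X_t, Y_t)_{t≥0} be a coalescent coupling of two split-merge chains on partitions of n with ρ(X₀, Y₀) = 1, such that: ρ(X_t, Y_t) ≤ 1 for all t; on the event {X_t ≠ Y_t}, ℙ(X_{t+1} = Y_{t+1} | (X_0,Y_0),…,(X_t,Y_t)) ≥ 4·s(X_t,Y_t)/n²; and 𝔼[s(X_t, Y_t)] ≥ β·n for all t ≥ α·n. Then ℙ(X_{⌈αn + n/2⌉} = Y_{⌈αn + n/2⌉}) ≥ β. -/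
noncomputable section
open scoped BigOperators Classical
set_option maxHeartbeats 1000000

/-- Auxiliary equivalence: separating the last coordinate of a tuple. -/
private def mySnocEquiv (Z : Type*) (t : ℕ) : ((Fin (t + 1) → Z) × Z) ≃ (Fin (t + 2) → Z) where
  toFun p := Fin.snoc p.1 p.2
  invFun f := (Fin.init f, f (Fin.last (t + 1)))
  left_inv p := by
    refine Prod.ext ?_ ?_ <;> simp
  right_inv f := by simp

private lemma sum_diag_ite {S : Type*} [Fintype S] [DecidableEq S] (f : S × S → ℝ) :
    ∑ z : S × S, (if z.1 = z.2 then f z else 0) = ∑ w : S, f (w, w) := by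
  rw [Fintype.sum_prod_type]
  simp

private lemma pow_le_half {n m : ℕ} (hn : 2 ≤ n) (hm1 : 1 ≤ m)
    (hm : (n : ℝ) ≤ 2 * m + 2) : (1 - 2 / (n : ℝ)) ^ m ≤ 1 / 2 := by
  rcases eq_or_lt_of_le hn with h2 | h3
  · have hz : (1 - 2 / (n : ℝ)) = 0 := by
      rw [← h2]; norm_num
    rw [hz, zero_pow (by omega)]; norm_num
  · have hn3 : (3:ℝ) ≤ (n:ℝ) := by exact_mod_cast h3
    have hd : (0:ℝ) < (n:ℝ) - 2 := by linarith
    have hnR : (0:ℝ) < (n:ℝ) := by linarith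
    have hapos : (0:ℝ) < 2 / ((n:ℝ) - 2) := by positivity
    have hb : (2:ℝ) ≤ (1 + 2 / ((n:ℝ) - 2)) ^ m := by
      have h1 : (1:ℝ) + m * (2 / ((n:ℝ) - 2)) ≤ (1 + 2 / ((n:ℝ) - 2)) ^ m :=
        one_add_mul_le_pow (by linarith) m
      have h2' : (1:ℝ) ≤ (m:ℝ) * 2 / ((n:ℝ) - 2) := by
        rw [le_div_iff₀ hd]; linarith
      have h3' : (m:ℝ) * (2 / ((n:ℝ) - 2)) = (m:ℝ) * 2 / ((n:ℝ) - 2) := by ring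
      linarith
    have hkey : (1 - 2 / (n:ℝ)) * (1 + 2 / ((n:ℝ) - 2)) = 1 := by
      field_simp
      ring
    have hpow : (1 - 2 / (n:ℝ)) ^ m * (1 + 2 / ((n:ℝ) - 2)) ^ m = 1 := by
      rw [← mul_pow, hkey, one_pow]
    have hA : (0:ℝ) ≤ 1 - 2 / (n:ℝ) := by
      have : 2 / (n:ℝ) ≤ 1 := by rw [div_le_one hnR]; linarith
      linarith
    have hAm : (0:ℝ) ≤ (1 - 2 / (n:ℝ)) ^ m := pow_nonneg hA m
    nlinarith [mul_le_mul_of_nonneg_left hb hAm]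

private lemma probAt_succ (n : ℕ)
    (P : (t : ℕ) → (Fin (t + 1) → Nat.Partition n × Nat.Partition n) → ℝ) (t : ℕ) :
    probAt n P (t + 1) (fun z => z.1 = z.2)
      = ∑ h : Fin (t + 1) → Nat.Partition n × Nat.Partition n,
          ∑ w : Nat.Partition n, P (t + 1) (Fin.snoc h (w, w)) := by
  symm
  calc ∑ h : Fin (t + 1) → Nat.Partition n × Nat.Partition n,
          ∑ w : Nat.Partition n, P (t + 1) (Fin.snoc h (w, w))
      = ∑ h : Fin (t + 1) → Nat.Partition n × Nat.Partition n,
          ∑ z : Nat.Partition n × Nat.Partition n,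
            (if z.1 = z.2 then P (t + 1) (Fin.snoc h z) else 0) :=
        Finset.sum_congr rfl fun h _ => (sum_diag_ite fun z => P (t + 1) (Fin.snoc h z)).symm
    _ = ∑ p : (Fin (t + 1) → Nat.Partition n × Nat.Partition n)
            × (Nat.Partition n × Nat.Partition n),
          (if p.2.1 = p.2.2 then P (t + 1) (Fin.snoc p.1 p.2) else 0) := by
        rw [Fintype.sum_prod_type]
    _ = probAt n P (t + 1) (fun z => z.1 = z.2) := by
        refine Fintype.sum_equiv (mySnocEquiv (Nat.Partition n × Nat.Partition n) t) _ _
          fun p => ?_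
        simp [mySnocEquiv, probAt]

private lemma step_ineq (n : ℕ) (hn : 2 ≤ n) (β : ℝ)
    (P : (t : ℕ) → (Fin (t + 1) → Nat.Partition n × Nat.Partition n) → ℝ)
    (hpos : ∀ t h, 0 ≤ P t h)
    (hmarg : ∀ (t : ℕ) (h : Fin (t + 1) → Nat.Partition n × Nat.Partition n),
      P t h = ∑ z : Nat.Partition n × Nat.Partition n, P (t + 1) (Fin.snoc h z))
    (hco : IsCoalescent n P) (hmb : MeetLowerBound n P) (t : ℕ)
    (hE : β * n ≤ expAt n P t (fun z => sPart n z.1 z.2)) :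
    (1 - 2 / (n:ℝ)) * probAt n P t (fun z => z.1 = z.2) + 4 * β / n
      ≤ probAt n P (t + 1) (fun z => z.1 = z.2) := by
  have hnR : (0:ℝ) < (n:ℝ) := by exact_mod_cast (by omega : 0 < n)
  rw [probAt_succ]
  have key : ∀ h : Fin (t + 1) → Nat.Partition n × Nat.Partition n,
      (1 - 2 / (n:ℝ)) * (if (h (Fin.last t)).1 = (h (Fin.last t)).2 then P t h else 0)
        + 4 / (n:ℝ) ^ 2 * (P t h * sPart n (h (Fin.last t)).1 (h (Fin.last t)).2)
      ≤ ∑ w : Nat.Partition n, P (t + 1) (Fin.snoc h (w, w)) := by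
    intro h
    by_cases heq : (h (Fin.last t)).1 = (h (Fin.last t)).2
    · have hsum : ∑ w : Nat.Partition n, P (t + 1) (Fin.snoc h (w, w)) = P t h := by
        rw [hmarg t h, ← sum_diag_ite (fun z => P (t + 1) (Fin.snoc h z))]
        refine Finset.sum_congr rfl fun z _ => ?_
        by_cases hz : z.1 = z.2
        · rw [if_pos hz]
        · rw [if_neg hz]
          by_contra hne
          apply hz
          have hlast := hco (t + 1) (Fin.snoc h z) (Ne.symm hne)
            ((Fin.last t).castSucc) (Fin.last (t + 1)) (Fin.le_last _)
            (by rwa [Fin.snoc_castSucc])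
          rwa [Fin.snoc_last] at hlast
      rw [hsum, if_pos heq, sPart, if_pos heq]
      have halg : (1 - 2 / (n:ℝ)) * P t h + 4 / (n:ℝ) ^ 2 * (P t h * ((n:ℝ) / 2)) = P t h := by
        field_simp
        ring
      linarith [le_of_eq halg]
    · have h1 := hmb t h heq
      rw [if_neg heq]
      have h2 : 4 * sPart n (h (Fin.last t)).1 (h (Fin.last t)).2 / (n:ℝ) ^ 2 * P t h
          = 4 / (n:ℝ) ^ 2 * (P t h * sPart n (h (Fin.last t)).1 (h (Fin.last t)).2) := by ring
      rw [h2] at h1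
      linarith
  have hprob : probAt n P t (fun z => z.1 = z.2)
      = ∑ h : Fin (t + 1) → Nat.Partition n × Nat.Partition n,
          (if (h (Fin.last t)).1 = (h (Fin.last t)).2 then P t h else 0) :=
    Finset.sum_congr rfl fun h _ => by
      by_cases hc : (h (Fin.last t)).1 = (h (Fin.last t)).2
      · rw [if_pos hc, if_pos hc]
      · rw [if_neg hc, if_neg hc]
  have hexp' : expAt n P t (fun z => sPart n z.1 z.2)
      = ∑ h : Fin (t + 1) → Nat.Partition n × Nat.Partition n,
          P t h * sPart n (h (Fin.last t)).1 (h (Fin.last t)).2 := rfl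
  have hc : 4 / (n:ℝ) ^ 2 * (β * n) ≤ 4 / (n:ℝ) ^ 2 * expAt n P t (fun z => sPart n z.1 z.2) :=
    mul_le_mul_of_nonneg_left hE (by positivity)
  have hval : 4 / (n:ℝ) ^ 2 * (β * (n:ℝ)) = 4 * β / n := by
    field_simp
  calc (1 - 2 / (n:ℝ)) * probAt n P t (fun z => z.1 = z.2) + 4 * β / n
      ≤ (1 - 2 / (n:ℝ)) * probAt n P t (fun z => z.1 = z.2)
        + 4 / (n:ℝ) ^ 2 * expAt n P t (fun z => sPart n z.1 z.2) := by linarith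
    _ = ∑ h : Fin (t + 1) → Nat.Partition n × Nat.Partition n,
        ((1 - 2 / (n:ℝ)) * (if (h (Fin.last t)).1 = (h (Fin.last t)).2 then P t h else 0)
          + 4 / (n:ℝ) ^ 2 * (P t h * sPart n (h (Fin.last t)).1 (h (Fin.last t)).2)) := by
        rw [hprob, hexp', Finset.sum_add_distrib, ← Finset.mul_sum, ← Finset.mul_sum]
    _ ≤ ∑ h : Fin (t + 1) → Nat.Partition n × Nat.Partition n,
        ∑ w : Nat.Partition n, P (t + 1) (Fin.snoc h (w, w)) :=
      Finset.sum_le_sum fun h _ => key h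

/-- If a coalescent coupling stays within distance `1`, meets at conditional rate at least
`4 s/n²`, and satisfies `𝔼[s(X_t,Y_t)] ≥ β n` for `t ≥ α n`, then the chains have met by
time `⌈α n + n/2⌉` with probability at least `β`. -/
theorem coupling_meets_by_time (n : ℕ) (hn : 1 ≤ n) (α β : ℝ) (hα : 0 < α) (hβ : 0 < β)
    (σ τ : Nat.Partition n) (h : rho n σ τ = 1)
    (P : (t : ℕ) → (Fin (t + 1) → Nat.Partition n × Nat.Partition n) → ℝ)
    (hP : IsSMCoupling n σ τ P) (hco : IsCoalescent n P) (hcl : StaysClose n P)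
    (hmb : MeetLowerBound n P)
    (hexp : ∀ t : ℕ, α * n ≤ (t : ℝ) → β * n ≤ expAt n P t (fun z => sPart n z.1 z.2)) :
    β ≤ probAt n P ⌈α * n + n / 2⌉₊ (fun z => z.1 = z.2) := by
  obtain ⟨hpos, hinit, hmarg, hm1, hm2⟩ := hP
  rcases Nat.lt_or_ge n 2 with hn1 | hn2
  · -- n = 1 : the hypothesis `rho n σ τ = 1` is contradictory
    interval_cases n
    exfalso
    have hst : σ = τ := Subsingleton.elim σ τ
    rw [hst] at h
    simp [rho] at h
  · have hnR : (0:ℝ) < (n:ℝ) := by exact_mod_cast (by omega : 0 < n)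
    set t0 := ⌈α * n⌉₊ with ht0
    set T := ⌈α * n + (n:ℝ) / 2⌉₊ with hT
    have hr0 : (0:ℝ) ≤ 1 - 2 / (n:ℝ) := by
      have : 2 / (n:ℝ) ≤ 1 := by
        rw [div_le_one hnR]; exact_mod_cast hn2
      linarith
    -- the key recursion
    have hrec : ∀ j : ℕ, 2 * β * (1 - (1 - 2 / (n:ℝ)) ^ j) ≤ probAt n P (t0 + j) (fun z => z.1 = z.2) := by
      intro j
      induction j with
      | zero =>
        have h0 : (0:ℝ) ≤ probAt n P (t0 + 0) (fun z => z.1 = z.2) := by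
          refine Finset.sum_nonneg fun h _ => ?_
          dsimp only
          split
          · exact hpos _ _
          · exact le_refl 0
        simpa using h0
      | succ j ih =>
        have htj : α * n ≤ ((t0 + j : ℕ) : ℝ) := by
          have h1 : α * n ≤ (t0 : ℝ) := Nat.le_ceil _
          have h2 : (t0 : ℝ) ≤ ((t0 + j : ℕ) : ℝ) := by
            exact_mod_cast Nat.le_add_right t0 j
          linarith
        have hstep := step_ineq n hn2 β P hpos hmarg hco hmb (t0 + j) (hexp (t0 + j) htj)
        have hmul := mul_le_mul_of_nonneg_left ih hr0
        have halg : (1 - 2 / (n:ℝ)) * (2 * β * (1 - (1 - 2 / (n:ℝ)) ^ j)) + 4 * β / n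
            = 2 * β * (1 - (1 - 2 / (n:ℝ)) ^ (j + 1)) := by
          have hne : (n:ℝ) ≠ 0 := ne_of_gt hnR
          ring
        have : t0 + (j + 1) = (t0 + j) + 1 := rfl
        rw [this]
        linarith
    -- T ≥ t0 + n/2
    have hTm : t0 + n / 2 ≤ T := by
      have h1 : ((n / 2 : ℕ) : ℝ) ≤ (n:ℝ) / 2 := Nat.cast_div_le
      have h2 : ⌈α * n + ((n / 2 : ℕ) : ℝ)⌉₊ ≤ T := Nat.ceil_mono (by linarith)
      rwa [Nat.ceil_add_natCast (le_of_lt (by positivity : (0:ℝ) < α * n))] at h2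
    set m := T - t0 with hm
    have hmT : T = t0 + m := by omega
    have hm1' : 1 ≤ m := by omega
    have hm2' : (n:ℝ) ≤ 2 * (m:ℝ) + 2 := by
      have : n ≤ 2 * m + 2 := by omega
      exact_mod_cast this
    have hhalf := pow_le_half hn2 hm1' hm2'
    have hfin := hrec m
    rw [← hmT] at hfin
    nlinarith [hβ.le, hhalf, hfin]

end
end

section
/- For every n ≥ 1, the diameter of the set 𝒫_n of partitions of n under the split-merge adjacency is at most n: for any two partitions σ and τ of n, ρ(σ,τ) ≤ n. -/
noncomputable section
open scoped BigOperators Classical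

lemma card_le_sum_of_pos (s : Multiset ℕ) (h : ∀ a ∈ s, 0 < a) : Multiset.card s ≤ s.sum := by
  induction s using Multiset.induction with
  | empty => simp
  | cons a s ih =>
    simp only [Multiset.card_cons, Multiset.sum_cons]
    have h1 := h a (Multiset.mem_cons_self a s)
    have h2 := ih (fun b hb => h b (Multiset.mem_cons_of_mem hb))
    omega

lemma all_ones_of_sum_eq_card (s : Multiset ℕ) (h : ∀ a ∈ s, 0 < a)
    (hsum : s.sum = Multiset.card s) : ∀ a ∈ s, a = 1 := by
  induction s using Multiset.induction with
  | empty => simp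
  | cons a s ih =>
    have hpos := h a (Multiset.mem_cons_self a s)
    have htail : ∀ b ∈ s, 0 < b := fun b hb => h b (Multiset.mem_cons_of_mem hb)
    have hle := card_le_sum_of_pos s htail
    simp only [Multiset.sum_cons, Multiset.card_cons] at hsum
    have ha1 : a = 1 := by omega
    have hs : s.sum = Multiset.card s := by omega
    intro b hb
    rcases Multiset.mem_cons.mp hb with rfl | hb
    · exact ha1
    · exact ih htail hs b hb

/-- The partition of `n` into a single part. -/
def topP (n : ℕ) (hn : 0 < n) : Nat.Partition n :=
  ⟨{n}, by intro i hi; rw [Multiset.mem_singleton] at hi; omega, by simp⟩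

/-- The partition of `n` into all ones. -/
def botP (n : ℕ) : Nat.Partition n :=
  ⟨Multiset.replicate n 1,
   by intro i hi; rw [Multiset.eq_of_mem_replicate hi]; norm_num,
   by simp⟩

lemma walk_to_top (n : ℕ) (hn : 0 < n) :
    ∀ k (p : Nat.Partition n), Multiset.card p.parts = k + 1 →
      ∃ w : (smGraph n).Walk p (topP n hn), w.length = k := by
  intro k
  induction k with
  | zero =>
    intro p hp
    have : p = topP n hn := by
      obtain ⟨a, ha⟩ := Multiset.card_eq_one.mp hp
      have hsum := p.parts_sum
      rw [ha] at hsum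
      simp only [Multiset.sum_singleton] at hsum
      ext1
      rw [ha, hsum]; rfl
    exact this ▸ ⟨SimpleGraph.Walk.nil, rfl⟩
  | succ k ih =>
    intro p hp
    obtain ⟨a, ha⟩ := Multiset.exists_mem_of_ne_zero
      (by intro h0; rw [h0] at hp; simp at hp : p.parts ≠ 0)
    have hcae : Multiset.card (p.parts.erase a) = k + 1 := by
      rw [Multiset.card_erase_of_mem ha, hp]; rfl
    obtain ⟨b, hb⟩ := Multiset.exists_mem_of_ne_zero
      (by intro h0; rw [h0] at hcae; simp at hcae : p.parts.erase a ≠ 0)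
    have hbp : b ∈ p.parts := Multiset.mem_of_mem_erase hb
    have hapos : 0 < a := p.parts_pos ha
    have hbpos : 0 < b := p.parts_pos hbp
    have hrec : a ::ₘ b ::ₘ (p.parts.erase a).erase b = p.parts := by
      rw [Multiset.cons_erase hb, Multiset.cons_erase ha]
    have hsumq : ((a + b) ::ₘ (p.parts.erase a).erase b).sum = n := by
      have := p.parts_sum
      rw [← hrec] at this
      simp only [Multiset.sum_cons] at this ⊢
      omega
    set q : Nat.Partition n :=
      ⟨(a + b) ::ₘ (p.parts.erase a).erase b,
       by
         intro i hi
         rcases Multiset.mem_cons.mp hi with rfl | hi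
         · omega
         · exact p.parts_pos (Multiset.mem_of_mem_erase (Multiset.mem_of_mem_erase hi)),
       hsumq⟩ with hq
    have hcardq : Multiset.card q.parts = k + 1 := by
      have h1 : Multiset.card ((p.parts.erase a).erase b) = k := by
        rw [Multiset.card_erase_of_mem hb, hcae]; rfl
      simp [hq, h1]
    have hadj : (smGraph n).Adj p q := by
      constructor
      · intro h
        rw [h] at hp
        omega
      · left
        refine ⟨a + b, Multiset.mem_cons_self _ _, a, hapos, by omega, ?_⟩
        have : q.parts.erase (a + b) = (p.parts.erase a).erase b := by
          simp [hq, Multiset.erase_cons_head]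
        rw [this]
        have hab : a + b - a = b := by omega
        rw [hab, hrec]
    obtain ⟨w, hw⟩ := ih q hcardq
    exact ⟨SimpleGraph.Walk.cons hadj w, by simp [hw]⟩

lemma walk_to_bot (n : ℕ) :
    ∀ k (p : Nat.Partition n), Multiset.card p.parts + k = n →
      ∃ w : (smGraph n).Walk p (botP n), w.length = k := by
  intro k
  induction k with
  | zero =>
    intro p hp
    have hall : ∀ a ∈ p.parts, a = 1 :=
      all_ones_of_sum_eq_card p.parts (fun a ha => p.parts_pos ha)
        (by rw [p.parts_sum]; omega)
    have : p = botP n := by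
      ext1
      rw [show (botP n).parts = Multiset.replicate n 1 from rfl,
        Multiset.eq_replicate]
      exact ⟨by omega, hall⟩
    exact this ▸ ⟨SimpleGraph.Walk.nil, rfl⟩
  | succ k ih =>
    intro p hp
    have hbig : ∃ a ∈ p.parts, 2 ≤ a := by
      by_contra h
      push_neg at h
      have : ∀ a ∈ p.parts, a = 1 := by
        intro a ha
        have := p.parts_pos ha
        have := h a ha
        omega
      have : p.parts.sum = Multiset.card p.parts := by
        rw [Multiset.eq_replicate_card.mpr this]
        simp
      rw [p.parts_sum] at this
      omega
    obtain ⟨a, ha, ha2⟩ := hbig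
    have hsumq : ((1 : ℕ) ::ₘ (a - 1) ::ₘ p.parts.erase a).sum = n := by
      have h1 : (a ::ₘ p.parts.erase a).sum = n := by
        rw [Multiset.cons_erase ha, p.parts_sum]
      simp only [Multiset.sum_cons] at h1 ⊢
      omega
    set q : Nat.Partition n :=
      ⟨(1 : ℕ) ::ₘ (a - 1) ::ₘ p.parts.erase a,
       by
         intro i hi
         rcases Multiset.mem_cons.mp hi with rfl | hi
         · norm_num
         rcases Multiset.mem_cons.mp hi with rfl | hi
         · omega
         · exact p.parts_pos (Multiset.mem_of_mem_erase hi),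
       hsumq⟩ with hq
    have hcardq : Multiset.card q.parts + k = n := by
      have hcp : 0 < Multiset.card p.parts := Multiset.card_pos.mpr
        (by intro h0; rw [h0] at ha; simp at ha)
      have h1 : Multiset.card (p.parts.erase a) + 1 = Multiset.card p.parts := by
        rw [Multiset.card_erase_of_mem ha, Nat.pred_eq_sub_one]
        omega
      have h2 : Multiset.card q.parts = Multiset.card (p.parts.erase a) + 2 := by
        simp [hq]
      omega
    have hadj : (smGraph n).Adj p q := by
      constructor
      · intro h
        rw [h] at hp
        omega
      · right
        exact ⟨a, ha, 1, le_refl 1, by omega, rfl⟩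
    obtain ⟨w, hw⟩ := ih q hcardq
    exact ⟨SimpleGraph.Walk.cons hadj w, by simp [hw]⟩

/-- The diameter of the set of partitions of `n` under split-merge adjacency is at most `n`. -/
theorem sm_diameter_le (n : ℕ) (hn : 1 ≤ n) (σ τ : Nat.Partition n) : rho n σ τ ≤ n := by
  have hn0 : 0 < n := hn
  have hcσpos : 0 < Multiset.card σ.parts := Multiset.card_pos.mpr
    (by intro h0; have := σ.parts_sum; rw [h0] at this; simp at this; omega)
  have hcτpos : 0 < Multiset.card τ.parts := Multiset.card_pos.mpr
    (by intro h0; have := τ.parts_sum; rw [h0] at this; simp at this; omega)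
  have hcσle : Multiset.card σ.parts ≤ n := by
    have := card_le_sum_of_pos σ.parts (fun a ha => σ.parts_pos ha)
    rw [σ.parts_sum] at this; exact this
  have hcτle : Multiset.card τ.parts ≤ n := by
    have := card_le_sum_of_pos τ.parts (fun a ha => τ.parts_pos ha)
    rw [τ.parts_sum] at this; exact this
  by_cases hcase : Multiset.card σ.parts + Multiset.card τ.parts ≤ n + 2
  · obtain ⟨w1, hw1⟩ := walk_to_top n hn0 (Multiset.card σ.parts - 1) σ (by omega)
    obtain ⟨w2, hw2⟩ := walk_to_top n hn0 (Multiset.card τ.parts - 1) τ (by omega)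
    have hle := SimpleGraph.dist_le (w1.append w2.reverse)
    rw [SimpleGraph.Walk.length_append, SimpleGraph.Walk.length_reverse, hw1, hw2] at hle
    unfold rho
    omega
  · obtain ⟨w1, hw1⟩ := walk_to_bot n (n - Multiset.card σ.parts) σ (by omega)
    obtain ⟨w2, hw2⟩ := walk_to_bot n (n - Multiset.card τ.parts) τ (by omega)
    have hle := SimpleGraph.dist_le (w1.append w2.reverse)
    rw [SimpleGraph.Walk.length_append, SimpleGraph.Walk.length_reverse, hw1, hw2] at hle
    unfold rho
    omega

end
end
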